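/- arXiv:2310.10964 — 4 statements merged into one kernel-verified Lean document; each statement's English description precedes it below -/
import Mathlib

section
/- Let X₁, X₂ be independent exponential random variables with mean 1, let P₁, P₂, σ², N₁, N₂ > 0 and b₁, b₂ > 0, and set γ_k = X_k·P_k/σ² for k = 1,2. Then the two-round outage probability p_{out,2} = ℙ( N₁log₂(1+γ₁) < b₁ and N₁log₂(1+γ₁)+N₂log₂(1+γ₂) < b₁+b₂ ) equals e^{−(2^{b₂/N₂}−1)σ²/P₂} − e^{−(2^{(b₁+b₂)/N₂}−1)σ²/P₂} + (1 − e^{−(2^{b₁/N₁}−1)σ²/P₁})(1 − e^{−(2^{b₂/N₂}−1)σ²/P₂}) − φ, where φ = (σ²/P₂)·e^{σ²/P₁} · ∫_{2^{b₂/N₂}−1}^{2^{(b₁+b₂)/N₂}−1} exp(−(σ²/P₁)·2^{(b₁+b₂−N₂log₂(1+t))/N₁}) · e^{−(σ²/P₂)t} dt. -/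
open MeasureTheory ProbabilityTheory Real Set

namespace OutageAux

lemma two_rpow_cont : Continuous (fun y : ℝ => (2:ℝ) ^ y) :=
  continuous_iff_continuousAt.mpr fun _ => Real.continuousAt_const_rpow two_ne_zero

lemma key_lt {P σ2 N : ℝ} (hP : 0 < P) (hσ : 0 < σ2) (hN : 0 < N) {x : ℝ} (hx : 0 ≤ x) (c : ℝ) :
    N * logb 2 (1 + x * P / σ2) < c ↔ x < ((2:ℝ) ^ (c / N) - 1) * σ2 / P := by
  have h1 : (0:ℝ) < 1 + x * P / σ2 := by positivity
  rw [mul_comm N, ← lt_div_iff₀ hN, Real.logb_lt_iff_lt_rpow one_lt_two h1,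
    lt_div_iff₀ hP, ← div_lt_iff₀ hσ, ← lt_sub_iff_add_lt']

lemma key_lt' {P σ2 N : ℝ} (hP : 0 < P) (hσ : 0 < σ2) (hN : 0 < N) {x : ℝ} (hx : 0 ≤ x) (c : ℝ) :
    c < N * logb 2 (1 + x * P / σ2) ↔ ((2:ℝ) ^ (c / N) - 1) * σ2 / P < x := by
  have h1 : (0:ℝ) < 1 + x * P / σ2 := by positivity
  rw [mul_comm N, ← div_lt_iff₀ hN, Real.lt_logb_iff_rpow_lt one_lt_two h1,
    div_lt_iff₀ hP, ← lt_div_iff₀ hσ, ← sub_lt_iff_lt_add']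

lemma key_le {P σ2 N : ℝ} (hP : 0 < P) (hσ : 0 < σ2) (hN : 0 < N) {x : ℝ} (hx : 0 ≤ x) (c : ℝ) :
    N * logb 2 (1 + x * P / σ2) ≤ c ↔ x ≤ ((2:ℝ) ^ (c / N) - 1) * σ2 / P :=
  le_iff_le_iff_lt_iff_lt.mpr (key_lt' hP hσ hN hx c)

lemma key_le' {P σ2 N : ℝ} (hP : 0 < P) (hσ : 0 < σ2) (hN : 0 < N) {x : ℝ} (hx : 0 ≤ x) (c : ℝ) :
    c ≤ N * logb 2 (1 + x * P / σ2) ↔ ((2:ℝ) ^ (c / N) - 1) * σ2 / P ≤ x :=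
  le_iff_le_iff_lt_iff_lt.mpr (key_lt hP hσ hN hx c)

lemma qpos {P σ2 N b : ℝ} (hP : 0 < P) (hσ : 0 < σ2) (hN : 0 < N) (hb : 0 < b) :
    0 < ((2:ℝ) ^ (b / N) - 1) * σ2 / P := by
  have h1 : (1:ℝ) < 2 ^ (b / N) := by
    have := (Real.rpow_lt_rpow_left_iff (x := 2) one_lt_two).mpr
      (show (0:ℝ) < b / N from div_pos hb hN)
    simpa using this
  exact div_pos (mul_pos (by linarith) hσ) hP

lemma expMeasure_def : expMeasure 1 = volume.withDensity (exponentialPDF 1) := rfl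

lemma expMeasure_Iio_zero : expMeasure 1 (Iio 0) = 0 := by
  rw [expMeasure_def, withDensity_apply _ measurableSet_Iio]
  exact lintegral_exponentialPDF_of_nonpos le_rfl

lemma expMeasure_Iio {a : ℝ} (ha : 0 ≤ a) :
    expMeasure 1 (Iio a) = ENNReal.ofReal (1 - rexp (-a)) := by
  have h1 : expMeasure 1 (Iic a) = ENNReal.ofReal (1 - rexp (-a)) := by
    rw [expMeasure_def, withDensity_apply _ measurableSet_Iic,
      lintegral_exponentialPDF_eq_antiDeriv one_pos, if_pos ha, one_mul]
  have h2 : expMeasure 1 {a} = 0 := by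
    rw [expMeasure_def, withDensity_apply _ (measurableSet_singleton a),
      Measure.restrict_eq_zero.mpr Real.volume_singleton, lintegral_zero_measure]
  refine le_antisymm ?_ ?_
  · rw [← h1]; exact measure_mono Iio_subset_Iic_self
  · rw [← h1]
    calc expMeasure 1 (Iic a) ≤ expMeasure 1 (Iio a ∪ {a}) := by
          rw [Set.Iio_union_right]
      _ ≤ expMeasure 1 (Iio a) + expMeasure 1 {a} := measure_union_le _ _
      _ = expMeasure 1 (Iio a) := by rw [h2, add_zero]

lemma expMeasure_nonneg_part (A : Set ℝ) :
    expMeasure 1 A = expMeasure 1 (A ∩ Ici 0) := by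
  refine le_antisymm ?_ (measure_mono inter_subset_left)
  calc expMeasure 1 A ≤ expMeasure 1 ((A ∩ Ici 0) ∪ Iio 0) := by
        refine measure_mono fun y hy => ?_
        by_cases h : 0 ≤ y
        · exact Or.inl ⟨hy, h⟩
        · exact Or.inr (not_le.mp h)
    _ ≤ expMeasure 1 (A ∩ Ici 0) + expMeasure 1 (Iio 0) := measure_union_le _ _
    _ = expMeasure 1 (A ∩ Ici 0) := by rw [expMeasure_Iio_zero, add_zero]

lemma expMeasure_Ico {m : ℝ} : expMeasure 1 (Ico 0 m) = ENNReal.ofReal (1 - rexp (-m)) := by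
  rcases le_or_gt m 0 with hm | hm
  · rw [Ico_eq_empty (by simp [not_lt]; linarith), measure_empty]
    symm
    rw [ENNReal.ofReal_eq_zero, sub_nonpos]
    exact Real.one_le_exp (by linarith)
  · have h1 : Iio m ∩ Ici 0 = Ico 0 m := by
      ext y; simp [mem_Ico, and_comm]
    rw [show Ico 0 m = Iio m ∩ Ici 0 from h1.symm, ← expMeasure_nonneg_part,
      expMeasure_Iio hm.le]

/-- measure of a two-constraint section set -/
lemma sec_measure {P σ2 N b : ℝ} (hP : 0 < P) (hσ : 0 < σ2) (hN : 0 < N) (hb : 0 < b) (c : ℝ) :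
    expMeasure 1 {y : ℝ | N * logb 2 (1 + y * P / σ2) < b ∧ N * logb 2 (1 + y * P / σ2) < c}
      = ENNReal.ofReal (1 - rexp (-(min (((2:ℝ) ^ (b / N) - 1) * σ2 / P)
          (max (((2:ℝ) ^ (c / N) - 1) * σ2 / P) 0)))) := by
  have hqbpos : 0 < ((2:ℝ) ^ (b / N) - 1) * σ2 / P := qpos hP hσ hN hb
  have hA : {y : ℝ | N * logb 2 (1 + y * P / σ2) < b ∧ N * logb 2 (1 + y * P / σ2) < c} ∩ Ici 0
      = Ico 0 (min (((2:ℝ) ^ (b / N) - 1) * σ2 / P) (((2:ℝ) ^ (c / N) - 1) * σ2 / P)) := by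
    ext y
    simp only [mem_inter_iff, mem_setOf_eq, mem_Ici, mem_Ico, lt_min_iff]
    constructor
    · rintro ⟨⟨h1, h2⟩, hy⟩
      exact ⟨hy, (key_lt hP hσ hN hy b).mp h1, (key_lt hP hσ hN hy c).mp h2⟩
    · rintro ⟨hy, h1, h2⟩
      exact ⟨⟨(key_lt hP hσ hN hy b).mpr h1, (key_lt hP hσ hN hy c).mpr h2⟩, hy⟩
  rw [expMeasure_nonneg_part, hA]
  rcases le_or_gt (((2:ℝ) ^ (c / N) - 1) * σ2 / P) 0 with h | h
  · rw [min_eq_right (h.trans hqbpos.le), max_eq_right h, min_eq_right hqbpos.le,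
      expMeasure_Ico, neg_zero, Real.exp_zero, sub_self, ENNReal.ofReal_zero,
      ENNReal.ofReal_eq_zero, sub_nonpos]
    exact Real.one_le_exp (by linarith)
  · rw [max_eq_left h.le, expMeasure_Ico]
noncomputable def sfun (P₁ P₂ σ2 N₁ N₂ b₁ b₂ x : ℝ) : ℝ :=
  ((2:ℝ) ^ ((b₁ + b₂ - N₂ * logb 2 (1 + x * P₂ / σ2)) / N₁) - 1) * σ2 / P₁

noncomputable def Ffun (P₁ P₂ σ2 N₁ N₂ b₁ b₂ x : ℝ) : ℝ :=
  1 - rexp (-(min (((2:ℝ) ^ (b₁ / N₁) - 1) * σ2 / P₁) (max (sfun P₁ P₂ σ2 N₁ N₂ b₁ b₂ x) 0)))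

lemma F_nonneg {P₁ P₂ σ2 N₁ N₂ b₁ b₂ : ℝ} (hP₁ : 0 < P₁) (hσ : 0 < σ2) (hN₁ : 0 < N₁)
    (hb₁ : 0 < b₁) (x : ℝ) : 0 ≤ Ffun P₁ P₂ σ2 N₁ N₂ b₁ b₂ x := by
  have h1 : 0 ≤ min (((2:ℝ) ^ (b₁ / N₁) - 1) * σ2 / P₁) (max (sfun P₁ P₂ σ2 N₁ N₂ b₁ b₂ x) 0) :=
    le_min (qpos hP₁ hσ hN₁ hb₁).le (le_max_right _ _)
  have h2 : rexp (-(min (((2:ℝ) ^ (b₁ / N₁) - 1) * σ2 / P₁)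
      (max (sfun P₁ P₂ σ2 N₁ N₂ b₁ b₂ x) 0))) ≤ 1 := Real.exp_le_one_iff.mpr (by linarith)
  rw [Ffun]; linarith

lemma F_le_one {P₁ P₂ σ2 N₁ N₂ b₁ b₂ x : ℝ} : Ffun P₁ P₂ σ2 N₁ N₂ b₁ b₂ x ≤ 1 := by
  rw [Ffun]; have := Real.exp_pos (-(min (((2:ℝ) ^ (b₁ / N₁) - 1) * σ2 / P₁)
    (max (sfun P₁ P₂ σ2 N₁ N₂ b₁ b₂ x) 0))); linarith

lemma F_high {P₁ P₂ σ2 N₁ N₂ b₁ b₂ : ℝ} (hP₁ : 0 < P₁) (hP₂ : 0 < P₂) (hσ : 0 < σ2)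
    (hN₁ : 0 < N₁) (hN₂ : 0 < N₂) (hb₁ : 0 < b₁) {x : ℝ} (hx : 0 ≤ x)
    (hq : ((2:ℝ) ^ ((b₁ + b₂) / N₂) - 1) * σ2 / P₂ ≤ x) :
    Ffun P₁ P₂ σ2 N₁ N₂ b₁ b₂ x = 0 := by
  have h1 : b₁ + b₂ ≤ N₂ * logb 2 (1 + x * P₂ / σ2) := (key_le' hP₂ hσ hN₂ hx _).mpr hq
  have h2 : (2:ℝ) ^ ((b₁ + b₂ - N₂ * logb 2 (1 + x * P₂ / σ2)) / N₁) ≤ 1 :=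
    Real.rpow_le_one_of_one_le_of_nonpos one_le_two
      (div_nonpos_of_nonpos_of_nonneg (by linarith) hN₁.le)
  have h3 : sfun P₁ P₂ σ2 N₁ N₂ b₁ b₂ x ≤ 0 := by
    rw [sfun]
    exact div_nonpos_of_nonpos_of_nonneg
      (mul_nonpos_iff.mpr (Or.inr ⟨by linarith, hσ.le⟩)) hP₁.le
  rw [Ffun, max_eq_right h3, min_eq_right (qpos hP₁ hσ hN₁ hb₁).le, neg_zero, Real.exp_zero,
    sub_self]

lemma F_low {P₁ P₂ σ2 N₁ N₂ b₁ b₂ : ℝ} (hP₁ : 0 < P₁) (hP₂ : 0 < P₂) (hσ : 0 < σ2)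
    (hN₁ : 0 < N₁) (hN₂ : 0 < N₂) (hb₁ : 0 < b₁) {x : ℝ} (hx : 0 ≤ x)
    (hq : x ≤ ((2:ℝ) ^ (b₂ / N₂) - 1) * σ2 / P₂) :
    Ffun P₁ P₂ σ2 N₁ N₂ b₁ b₂ x = 1 - rexp (-(((2:ℝ) ^ (b₁ / N₁) - 1) * σ2 / P₁)) := by
  have h1 : N₂ * logb 2 (1 + x * P₂ / σ2) ≤ b₂ := (key_le hP₂ hσ hN₂ hx _).mpr hq
  have h2 : (2:ℝ) ^ (b₁ / N₁) ≤ (2:ℝ) ^ ((b₁ + b₂ - N₂ * logb 2 (1 + x * P₂ / σ2)) / N₁) := by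
    exact (Real.rpow_le_rpow_left_iff one_lt_two).mpr
      ((div_le_div_iff_of_pos_right hN₁).mpr (by linarith))
  have h3 : ((2:ℝ) ^ (b₁ / N₁) - 1) * σ2 / P₁ ≤ sfun P₁ P₂ σ2 N₁ N₂ b₁ b₂ x := by
    rw [sfun]
    exact (div_le_div_iff_of_pos_right hP₁).mpr (mul_le_mul_of_nonneg_right (by linarith) hσ.le)
  rw [Ffun, max_eq_left ((qpos hP₁ hσ hN₁ hb₁).le.trans h3), min_eq_left h3]

lemma F_mid {P₁ P₂ σ2 N₁ N₂ b₁ b₂ : ℝ} (hP₁ : 0 < P₁) (hP₂ : 0 < P₂) (hσ : 0 < σ2)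
    (hN₁ : 0 < N₁) (hN₂ : 0 < N₂) (hb₁ : 0 < b₁) {x : ℝ} (hx : 0 ≤ x)
    (hq : ((2:ℝ) ^ (b₂ / N₂) - 1) * σ2 / P₂ ≤ x)
    (hq' : x ≤ ((2:ℝ) ^ ((b₁ + b₂) / N₂) - 1) * σ2 / P₂) :
    Ffun P₁ P₂ σ2 N₁ N₂ b₁ b₂ x = 1 - rexp (-(sfun P₁ P₂ σ2 N₁ N₂ b₁ b₂ x)) := by
  have h1 : b₂ ≤ N₂ * logb 2 (1 + x * P₂ / σ2) := (key_le' hP₂ hσ hN₂ hx _).mpr hq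
  have h1' : N₂ * logb 2 (1 + x * P₂ / σ2) ≤ b₁ + b₂ := (key_le hP₂ hσ hN₂ hx _).mpr hq'
  have h2 : (2:ℝ) ^ ((b₁ + b₂ - N₂ * logb 2 (1 + x * P₂ / σ2)) / N₁) ≤ (2:ℝ) ^ (b₁ / N₁) := by
    exact (Real.rpow_le_rpow_left_iff one_lt_two).mpr
      ((div_le_div_iff_of_pos_right hN₁).mpr (by linarith))
  have h2' : (1:ℝ) ≤ (2:ℝ) ^ ((b₁ + b₂ - N₂ * logb 2 (1 + x * P₂ / σ2)) / N₁) := by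
    have := Real.rpow_le_rpow_left_iff (x := (2:ℝ)) one_lt_two (y := 0)
      (z := (b₁ + b₂ - N₂ * logb 2 (1 + x * P₂ / σ2)) / N₁)
    rw [Real.rpow_zero] at this
    exact this.mpr (div_nonneg (by linarith) hN₁.le)
  have h3 : sfun P₁ P₂ σ2 N₁ N₂ b₁ b₂ x ≤ ((2:ℝ) ^ (b₁ / N₁) - 1) * σ2 / P₁ := by
    rw [sfun]
    exact (div_le_div_iff_of_pos_right hP₁).mpr (mul_le_mul_of_nonneg_right (by linarith) hσ.le)
  have h4 : 0 ≤ sfun P₁ P₂ σ2 N₁ N₂ b₁ b₂ x := by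
    rw [sfun]
    exact div_nonneg (mul_nonneg (by linarith) hσ.le) hP₁.le
  rw [Ffun, max_eq_left h4, min_eq_right h3]

lemma measurable_logb2 : Measurable fun x : ℝ => Real.logb 2 x := by
  unfold Real.logb
  exact Real.measurable_log.div_const _

lemma sfun_meas {P₁ P₂ σ2 N₁ N₂ b₁ b₂ : ℝ} :
    Measurable (sfun P₁ P₂ σ2 N₁ N₂ b₁ b₂) := by
  unfold sfun
  exact ((((two_rpow_cont.measurable.comp ((measurable_const.sub (measurable_const.mul
    (measurable_logb2.comp (((measurable_id.mul_const P₂).div_const σ2).const_add 1)))).div_const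
    N₁)).sub measurable_const).mul_const σ2).div_const P₁)

lemma F_meas {P₁ P₂ σ2 N₁ N₂ b₁ b₂ : ℝ} :
    Measurable (Ffun P₁ P₂ σ2 N₁ N₂ b₁ b₂) := by
  unfold Ffun
  exact measurable_const.sub (Real.measurable_exp.comp
    ((measurable_const.min (sfun_meas.max measurable_const)).neg))

lemma sfun_contOn {P₁ P₂ σ2 N₁ N₂ b₁ b₂ : ℝ} (hP₂ : 0 < P₂) (hσ : 0 < σ2) :
    ContinuousOn (sfun P₁ P₂ σ2 N₁ N₂ b₁ b₂) (Ici 0) := by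
  unfold sfun
  have hinner : ContinuousOn (fun x : ℝ => 1 + x * P₂ / σ2) (Ici 0) :=
    (by continuity : Continuous (fun x : ℝ => 1 + x * P₂ / σ2)).continuousOn
  have hlogb : ContinuousOn (fun x : ℝ => logb 2 (1 + x * P₂ / σ2)) (Ici 0) := by
    refine Real.continuousOn_logb.comp hinner fun x hx => ?_
    have hx' : (0:ℝ) ≤ x := hx
    have : (0:ℝ) < 1 + x * P₂ / σ2 := by positivity
    simp only [mem_compl_iff, mem_singleton_iff]
    exact ne_of_gt this
  exact (((two_rpow_cont.comp_continuousOn ((continuousOn_const.sub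
    (continuousOn_const.mul hlogb)).div_const N₁)).sub continuousOn_const).mul
    continuousOn_const).div_const P₁

lemma F_contOn {P₁ P₂ σ2 N₁ N₂ b₁ b₂ : ℝ} (hP₂ : 0 < P₂) (hσ : 0 < σ2) :
    ContinuousOn (Ffun P₁ P₂ σ2 N₁ N₂ b₁ b₂) (Ici 0) := by
  unfold Ffun
  have h1 : Continuous (fun y : ℝ =>
      rexp (-(min (((2:ℝ) ^ (b₁ / N₁) - 1) * σ2 / P₁) (max y 0)))) :=
    Real.continuous_exp.comp ((continuous_const.min (continuous_id.max continuous_const)).neg)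
  exact continuousOn_const.sub (h1.comp_continuousOn (sfun_contOn hP₂ hσ))

lemma expPDFReal_eq (x : ℝ) : exponentialPDFReal 1 x = if 0 ≤ x then rexp (-x) else 0 := by
  rw [exponentialPDFReal, gammaPDFReal]
  split_ifs with h
  · simp [Real.Gamma_one]
  · rfl

lemma intexp (a b : ℝ) : ∫ x in a..b, rexp (-x) = rexp (-a) - rexp (-b) := by
  rw [intervalIntegral.integral_comp_neg (fun x => rexp x), integral_exp]

end OutageAux

open OutageAux

/-- **Exact two-round outage probability of VL-XP-HARQ** (Theorem 1, case `k = 2`),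
expressed with the remaining one-dimensional integral `φ`. -/
theorem outage_prob_two_rounds
    {Ω : Type*} [MeasurableSpace Ω] (μ : Measure Ω) [IsProbabilityMeasure μ]
    (X₁ X₂ : Ω → ℝ) (hX₁ : Measurable X₁) (hX₂ : Measurable X₂)
    (hindep : IndepFun X₁ X₂ μ)
    (hlaw₁ : μ.map X₁ = expMeasure 1) (hlaw₂ : μ.map X₂ = expMeasure 1)
    (P₁ P₂ σ2 N₁ N₂ b₁ b₂ : ℝ)
    (hP₁ : 0 < P₁) (hP₂ : 0 < P₂) (hσ : 0 < σ2)
    (hN₁ : 0 < N₁) (hN₂ : 0 < N₂) (hb₁ : 0 < b₁) (hb₂ : 0 < b₂) :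
    (μ {ω | N₁ * logb 2 (1 + X₁ ω * P₁ / σ2) < b₁ ∧
        N₁ * logb 2 (1 + X₁ ω * P₁ / σ2) + N₂ * logb 2 (1 + X₂ ω * P₂ / σ2)
          < b₁ + b₂}).toReal
      = Real.exp (-((2 : ℝ) ^ (b₂ / N₂) - 1) * σ2 / P₂)
        - Real.exp (-((2 : ℝ) ^ ((b₁ + b₂) / N₂) - 1) * σ2 / P₂)
        + (1 - Real.exp (-((2 : ℝ) ^ (b₁ / N₁) - 1) * σ2 / P₁))
          * (1 - Real.exp (-((2 : ℝ) ^ (b₂ / N₂) - 1) * σ2 / P₂))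
        - (σ2 / P₂) * Real.exp (σ2 / P₁)
          * ∫ t in ((2 : ℝ) ^ (b₂ / N₂) - 1)..((2 : ℝ) ^ ((b₁ + b₂) / N₂) - 1),
              Real.exp (-(σ2 / P₁) * (2 : ℝ) ^ ((b₁ + b₂ - N₂ * logb 2 (1 + t)) / N₁))
                * Real.exp (-(σ2 / P₂) * t) := by
  classical
  haveI hprob : IsProbabilityMeasure (expMeasure 1) := isProbabilityMeasure_expMeasure one_pos
  set q₁ : ℝ := ((2:ℝ) ^ (b₁ / N₁) - 1) * σ2 / P₁ with hq₁def
  set q₂ : ℝ := ((2:ℝ) ^ (b₂ / N₂) - 1) * σ2 / P₂ with hq₂def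
  set q₁₂ : ℝ := ((2:ℝ) ^ ((b₁ + b₂) / N₂) - 1) * σ2 / P₂ with hq₁₂def
  have hq₁pos : 0 < q₁ := qpos hP₁ hσ hN₁ hb₁
  have hq₂pos : 0 < q₂ := qpos hP₂ hσ hN₂ hb₂
  have hq₂le : q₂ ≤ q₁₂ := by
    rw [hq₂def, hq₁₂def]
    have h2 : (2:ℝ) ^ (b₂/N₂) ≤ 2 ^ ((b₁+b₂)/N₂) :=
      (Real.rpow_le_rpow_left_iff one_lt_two).mpr ((div_le_div_iff_of_pos_right hN₂).mpr (by linarith))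
    exact (div_le_div_iff_of_pos_right hP₂).mpr (mul_le_mul_of_nonneg_right (by linarith) hσ.le)
  -- measurability of the two-dimensional event
  have hg₁ : Measurable fun x : ℝ => N₁ * logb 2 (1 + x * P₁ / σ2) :=
    measurable_const.mul (measurable_logb2.comp
      (((measurable_id.mul_const P₁).div_const σ2).const_add 1))
  have hg₂ : Measurable fun x : ℝ => N₂ * logb 2 (1 + x * P₂ / σ2) :=
    measurable_const.mul (measurable_logb2.comp
      (((measurable_id.mul_const P₂).div_const σ2).const_add 1))
  have hT : MeasurableSet {p : ℝ × ℝ |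
      N₁ * logb 2 (1 + p.2 * P₁ / σ2) < b₁ ∧
      N₁ * logb 2 (1 + p.2 * P₁ / σ2) + N₂ * logb 2 (1 + p.1 * P₂ / σ2) < b₁ + b₂} :=
    (measurableSet_lt (hg₁.comp measurable_snd) measurable_const).inter
      (measurableSet_lt ((hg₁.comp measurable_snd).add (hg₂.comp measurable_fst))
        measurable_const)
  have hpair : μ.map (fun ω => (X₂ ω, X₁ ω)) = (expMeasure 1).prod (expMeasure 1) := by
    rw [(indepFun_iff_map_prod_eq_prod_map_map hX₂.aemeasurable hX₁.aemeasurable).mp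
      hindep.symm, hlaw₁, hlaw₂]
  have hμE : μ {ω | N₁ * logb 2 (1 + X₁ ω * P₁ / σ2) < b₁ ∧
        N₁ * logb 2 (1 + X₁ ω * P₁ / σ2) + N₂ * logb 2 (1 + X₂ ω * P₂ / σ2) < b₁ + b₂}
      = ((expMeasure 1).prod (expMeasure 1)) {p : ℝ × ℝ |
        N₁ * logb 2 (1 + p.2 * P₁ / σ2) < b₁ ∧
        N₁ * logb 2 (1 + p.2 * P₁ / σ2) + N₂ * logb 2 (1 + p.1 * P₂ / σ2) < b₁ + b₂} := by
    rw [← hpair, Measure.map_apply (hX₂.prodMk hX₁) hT]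
    rfl
  -- section measures
  have hsec : ∀ x : ℝ,
      (expMeasure 1) {y : ℝ | N₁ * logb 2 (1 + y * P₁ / σ2) < b₁ ∧
        N₁ * logb 2 (1 + y * P₁ / σ2) + N₂ * logb 2 (1 + x * P₂ / σ2) < b₁ + b₂}
      = ENNReal.ofReal (Ffun P₁ P₂ σ2 N₁ N₂ b₁ b₂ x) := by
    intro x
    have hset : {y : ℝ | N₁ * logb 2 (1 + y * P₁ / σ2) < b₁ ∧
        N₁ * logb 2 (1 + y * P₁ / σ2) + N₂ * logb 2 (1 + x * P₂ / σ2) < b₁ + b₂}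
        = {y : ℝ | N₁ * logb 2 (1 + y * P₁ / σ2) < b₁ ∧
          N₁ * logb 2 (1 + y * P₁ / σ2) < b₁ + b₂ - N₂ * logb 2 (1 + x * P₂ / σ2)} := by
      ext y; simp only [mem_setOf_eq, lt_sub_iff_add_lt]
    rw [hset, sec_measure hP₁ hσ hN₁ hb₁ (b₁ + b₂ - N₂ * logb 2 (1 + x * P₂ / σ2)), Ffun, sfun]
  have hlint : μ {ω | N₁ * logb 2 (1 + X₁ ω * P₁ / σ2) < b₁ ∧
        N₁ * logb 2 (1 + X₁ ω * P₁ / σ2) + N₂ * logb 2 (1 + X₂ ω * P₂ / σ2) < b₁ + b₂}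
      = ∫⁻ x, ENNReal.ofReal (Ffun P₁ P₂ σ2 N₁ N₂ b₁ b₂ x) ∂(expMeasure 1) := by
    rw [hμE, Measure.prod_apply hT]
    exact lintegral_congr fun x => hsec x
  have hpdfmeas : Measurable (exponentialPDF 1) :=
    (measurable_exponentialPDFReal 1).ennreal_ofReal
  have hlint2 : ∫⁻ x, ENNReal.ofReal (Ffun P₁ P₂ σ2 N₁ N₂ b₁ b₂ x) ∂(expMeasure 1)
      = ∫⁻ x, ENNReal.ofReal (exponentialPDFReal 1 x * Ffun P₁ P₂ σ2 N₁ N₂ b₁ b₂ x) := by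
    rw [expMeasure_def,
      lintegral_withDensity_eq_lintegral_mul _ hpdfmeas F_meas.ennreal_ofReal]
    refine lintegral_congr fun x => ?_
    simp only [Pi.mul_apply, exponentialPDF]
    rw [ENNReal.ofReal_mul (exponentialPDFReal_nonneg one_pos x)]
  have hGnn : ∀ x, 0 ≤ exponentialPDFReal 1 x * Ffun P₁ P₂ σ2 N₁ N₂ b₁ b₂ x := fun x =>
    mul_nonneg (exponentialPDFReal_nonneg one_pos x) (F_nonneg hP₁ hσ hN₁ hb₁ x)
  have htoReal : (∫⁻ x, ENNReal.ofReal
        (exponentialPDFReal 1 x * Ffun P₁ P₂ σ2 N₁ N₂ b₁ b₂ x)).toReal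
      = ∫ x, exponentialPDFReal 1 x * Ffun P₁ P₂ σ2 N₁ N₂ b₁ b₂ x :=
    (integral_eq_lintegral_of_nonneg_ae (ae_of_all _ hGnn)
      ((measurable_exponentialPDFReal 1).mul F_meas).aestronglyMeasurable).symm
  -- reduce to an interval integral
  have hindic : (fun x => exponentialPDFReal 1 x * Ffun P₁ P₂ σ2 N₁ N₂ b₁ b₂ x)
      =ᵐ[volume] (Ioc 0 q₁₂).indicator
        (fun x => rexp (-x) * Ffun P₁ P₂ σ2 N₁ N₂ b₁ b₂ x) := by
    have h0 : ∀ᵐ x : ℝ, x ≠ 0 := by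
      rw [ae_iff]
      have : {x : ℝ | ¬x ≠ 0} = {(0:ℝ)} := by ext y; simp
      rw [this]
      exact Real.volume_singleton
    filter_upwards [h0] with x hx0
    rcases lt_trichotomy x 0 with hx | hx | hx
    · rw [indicator_of_notMem (by simp only [mem_Ioc, not_and_or, not_lt]; exact Or.inl hx.le),
        expPDFReal_eq, if_neg (not_le.mpr hx), zero_mul]
    · exact absurd hx hx0
    · rw [expPDFReal_eq, if_pos hx.le]
      by_cases hx2 : x ≤ q₁₂
      · rw [Set.indicator_of_mem (mem_Ioc.mpr ⟨hx, hx2⟩)]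
      · rw [Set.indicator_of_notMem (fun hmem => hx2 (mem_Ioc.mp hmem).2),
          F_high hP₁ hP₂ hσ hN₁ hN₂ hb₁ hx.le (not_le.mp hx2).le, mul_zero]
  have hIoc : ∫ x, exponentialPDFReal 1 x * Ffun P₁ P₂ σ2 N₁ N₂ b₁ b₂ x
      = ∫ x in (0:ℝ)..q₁₂, rexp (-x) * Ffun P₁ P₂ σ2 N₁ N₂ b₁ b₂ x := by
    rw [integral_congr_ae hindic, integral_indicator measurableSet_Ioc,
      intervalIntegral.integral_of_le (hq₂pos.le.trans hq₂le)]
  -- integrability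
  have hHcont : ContinuousOn (fun x => rexp (-x) * Ffun P₁ P₂ σ2 N₁ N₂ b₁ b₂ x) (Ici 0) :=
    (Real.continuous_exp.comp continuous_neg).continuousOn.mul (F_contOn hP₂ hσ)
  have hint1 : IntervalIntegrable (fun x => rexp (-x) * Ffun P₁ P₂ σ2 N₁ N₂ b₁ b₂ x)
      volume 0 q₂ := by
    apply ContinuousOn.intervalIntegrable
    refine hHcont.mono ?_
    rw [uIcc_of_le hq₂pos.le]
    exact Icc_subset_Ici_self
  have hint2 : IntervalIntegrable (fun x => rexp (-x) * Ffun P₁ P₂ σ2 N₁ N₂ b₁ b₂ x)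
      volume q₂ q₁₂ := by
    apply ContinuousOn.intervalIntegrable
    refine hHcont.mono ?_
    rw [uIcc_of_le hq₂le]
    exact fun y hy => hq₂pos.le.trans hy.1
  have hadd : ∫ x in (0:ℝ)..q₁₂, rexp (-x) * Ffun P₁ P₂ σ2 N₁ N₂ b₁ b₂ x
      = (∫ x in (0:ℝ)..q₂, rexp (-x) * Ffun P₁ P₂ σ2 N₁ N₂ b₁ b₂ x)
        + ∫ x in q₂..q₁₂, rexp (-x) * Ffun P₁ P₂ σ2 N₁ N₂ b₁ b₂ x :=
    (intervalIntegral.integral_add_adjacent_intervals hint1 hint2).symm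
  -- first piece
  have hpart1 : ∫ x in (0:ℝ)..q₂, rexp (-x) * Ffun P₁ P₂ σ2 N₁ N₂ b₁ b₂ x
      = (1 - rexp (-q₁)) * (1 - rexp (-q₂)) := by
    rw [intervalIntegral.integral_congr
      (g := fun x => rexp (-x) * (1 - rexp (-q₁))) ?_]
    · rw [intervalIntegral.integral_mul_const, intexp, neg_zero, Real.exp_zero]
      ring
    · intro x hx
      rw [uIcc_of_le hq₂pos.le] at hx
      show rexp (-x) * Ffun P₁ P₂ σ2 N₁ N₂ b₁ b₂ x = rexp (-x) * (1 - rexp (-q₁))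
      rw [F_low hP₁ hP₂ hσ hN₁ hN₂ hb₁ hx.1 hx.2, hq₁def]
  -- second piece
  have hpart2 : ∫ x in q₂..q₁₂, rexp (-x) * Ffun P₁ P₂ σ2 N₁ N₂ b₁ b₂ x
      = (rexp (-q₂) - rexp (-q₁₂))
        - ∫ x in q₂..q₁₂, rexp (-(sfun P₁ P₂ σ2 N₁ N₂ b₁ b₂ x)) * rexp (-x) := by
    have heq : EqOn (fun x => rexp (-x) * Ffun P₁ P₂ σ2 N₁ N₂ b₁ b₂ x)
        (fun x => rexp (-x) - rexp (-(sfun P₁ P₂ σ2 N₁ N₂ b₁ b₂ x)) * rexp (-x))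
        (uIcc q₂ q₁₂) := by
      intro x hx
      rw [uIcc_of_le hq₂le] at hx
      simp only
      rw [F_mid hP₁ hP₂ hσ hN₁ hN₂ hb₁ (hq₂pos.le.trans hx.1) hx.1 hx.2]
      ring
    have hintA : IntervalIntegrable (fun x : ℝ => rexp (-x)) volume q₂ q₁₂ :=
      ((Real.continuous_exp.comp continuous_neg).continuousOn).intervalIntegrable
    have hintB : IntervalIntegrable
        (fun x => rexp (-(sfun P₁ P₂ σ2 N₁ N₂ b₁ b₂ x)) * rexp (-x)) volume q₂ q₁₂ := by
      apply ContinuousOn.intervalIntegrable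
      refine ContinuousOn.mono (s := Ici 0) ?_ ?_
      · exact (Real.continuous_exp.comp_continuousOn
          ((sfun_contOn hP₂ hσ).neg)).mul
          (Real.continuous_exp.comp continuous_neg).continuousOn
      · rw [uIcc_of_le hq₂le]
        exact fun y hy => hq₂pos.le.trans hy.1
    rw [intervalIntegral.integral_congr heq, intervalIntegral.integral_sub hintA hintB, intexp]
  -- the φ integral
  have hc : σ2 / P₂ ≠ 0 := by positivity
  have hφ : (σ2 / P₂) * Real.exp (σ2 / P₁)
        * ∫ t in ((2 : ℝ) ^ (b₂ / N₂) - 1)..((2 : ℝ) ^ ((b₁ + b₂) / N₂) - 1),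
            Real.exp (-(σ2 / P₁) * (2 : ℝ) ^ ((b₁ + b₂ - N₂ * logb 2 (1 + t)) / N₁))
              * Real.exp (-(σ2 / P₂) * t)
      = ∫ x in q₂..q₁₂, rexp (-(sfun P₁ P₂ σ2 N₁ N₂ b₁ b₂ x)) * rexp (-x) := by
    have hcomp : ∀ t : ℝ,
        rexp (σ2 / P₁) * (Real.exp (-(σ2 / P₁) * (2 : ℝ)
            ^ ((b₁ + b₂ - N₂ * logb 2 (1 + t)) / N₁)) * Real.exp (-(σ2 / P₂) * t))
        = rexp (-(sfun P₁ P₂ σ2 N₁ N₂ b₁ b₂ (σ2 / P₂ * t))) * rexp (-(σ2 / P₂ * t)) := by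
      intro t
      have harg : 1 + σ2 / P₂ * t * P₂ / σ2 = 1 + t := by field_simp
      rw [sfun, harg, show -(σ2 / P₂) * t = -(σ2 / P₂ * t) by ring,
        ← mul_assoc, ← Real.exp_add]
      congr 2
      ring
    rw [mul_assoc, ← intervalIntegral.integral_const_mul]
    rw [intervalIntegral.integral_congr (g := fun t =>
      rexp (-(sfun P₁ P₂ σ2 N₁ N₂ b₁ b₂ (σ2 / P₂ * t))) * rexp (-(σ2 / P₂ * t)))
      (fun t _ => hcomp t)]
    rw [intervalIntegral.integral_comp_mul_left
      (fun x => rexp (-(sfun P₁ P₂ σ2 N₁ N₂ b₁ b₂ x)) * rexp (-x)) hc]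
    rw [smul_eq_mul, ← mul_assoc, mul_inv_cancel₀ hc, one_mul]
    have hb1 : σ2 / P₂ * ((2:ℝ) ^ (b₂ / N₂) - 1) = q₂ := by rw [hq₂def]; ring
    have hb2 : σ2 / P₂ * ((2:ℝ) ^ ((b₁ + b₂) / N₂) - 1) = q₁₂ := by rw [hq₁₂def]; ring
    rw [hb1, hb2]
  -- assemble
  have key : (μ {ω | N₁ * logb 2 (1 + X₁ ω * P₁ / σ2) < b₁ ∧
        N₁ * logb 2 (1 + X₁ ω * P₁ / σ2) + N₂ * logb 2 (1 + X₂ ω * P₂ / σ2)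
          < b₁ + b₂}).toReal
      = (1 - rexp (-q₁)) * (1 - rexp (-q₂)) + ((rexp (-q₂) - rexp (-q₁₂))
        - ∫ x in q₂..q₁₂, rexp (-(sfun P₁ P₂ σ2 N₁ N₂ b₁ b₂ x)) * rexp (-x)) := by
    rw [hlint, hlint2, htoReal, hIoc, hadd, hpart1, hpart2]
  rw [key, hφ]
  have e1 : Real.exp (-((2 : ℝ) ^ (b₂ / N₂) - 1) * σ2 / P₂) = rexp (-q₂) := by
    rw [hq₂def]; congr 1; ring
  have e2 : Real.exp (-((2 : ℝ) ^ ((b₁ + b₂) / N₂) - 1) * σ2 / P₂) = rexp (-q₁₂) := by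
    rw [hq₁₂def]; congr 1; ring
  have e3 : Real.exp (-((2 : ℝ) ^ (b₁ / N₁) - 1) * σ2 / P₁) = rexp (-q₁) := by
    rw [hq₁def]; congr 1; ring
  rw [e1, e2, e3]
  ring
end

section
/- Let X₁, X₂ be independent exponential random variables with mean 1, fix σ², b₁, b₂ > 0 and N₁, N₂ > 0 with N₁ ≠ N₂, and fix q₁, q₂ > 0. For ρ > 0 set P₁ = q₁ρ, P₂ = q₂ρ and γ_k = X_k·P_k/σ². Then lim_{ρ→∞} (P₁P₂/σ⁴)·ℙ( N₁log₂(1+γ₁) < b₁ and N₁log₂(1+γ₁)+N₂log₂(1+γ₂) < b₁+b₂ ) = (N₂/(N₂−N₁))·(2^{b₁/N₁ + b₂/N₂} − 2^{(b₁+b₂)/N₂}) − 2^{b₁/N₁} + 1. -/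
open MeasureTheory ProbabilityTheory Real Filter
open Set

lemma hlpr_expMeasure_Iio {m : ℝ} (hm : 0 ≤ m) :
    expMeasure 1 (Iio m) = ENNReal.ofReal (1 - exp (-m)) := by
  have h1 : expMeasure 1 = volume.withDensity (exponentialPDF 1) := rfl
  rw [h1, withDensity_apply _ measurableSet_Iio,
    setLIntegral_congr (Iio_ae_eq_Iic (a := m)),
    lintegral_exponentialPDF_eq_antiDeriv one_pos m, if_pos hm, one_mul]

lemma hlpr_ae_nonneg : ∀ᵐ y ∂ expMeasure 1, (0:ℝ) ≤ y := by
  rw [ae_iff]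
  have : {y : ℝ | ¬ 0 ≤ y} = Iio 0 := by ext y; simp [Iio, not_le]
  rw [this, hlpr_expMeasure_Iio le_rfl]
  simp

lemma hlpr_nu_cond {N c s : ℝ} (hN : 0 < N) (hc : 0 < c) (hs : 0 < s) :
    expMeasure 1 {y : ℝ | N * logb 2 (1 + c * y) < s}
      = ENNReal.ofReal (1 - exp (-((2 ^ (s / N) - 1) / c))) := by
  have h2 : (1:ℝ) < 2 ^ (s / N) :=
    Real.one_lt_rpow_iff_of_pos (by norm_num) |>.mpr (Or.inl ⟨one_lt_two, div_pos hs hN⟩)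
  have hm : 0 ≤ (2 ^ (s / N) - 1) / c := div_nonneg (by linarith) hc.le
  rw [← hlpr_expMeasure_Iio hm]
  apply measure_congr
  rw [Filter.eventuallyEq_set]
  filter_upwards [hlpr_ae_nonneg] with y hy
  have hpos : 0 < 1 + c * y := by nlinarith
  simp only [mem_setOf_eq, mem_Iio, ← lt_div_iff₀' hN,
    Real.logb_lt_iff_lt_rpow one_lt_two hpos, lt_div_iff₀ hc]
  constructor <;> intro h <;> linarith

lemma hlpr_one_sub_exp_le {s : ℝ} : 1 - exp (-s) ≤ s := by
  have := Real.add_one_le_exp (-s); linarith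

lemma hlpr_tendsto_c_mul {t : ℝ} (ht : 0 < t) :
    Tendsto (fun c : ℝ => c * (1 - exp (-(t / c)))) atTop (nhds t) := by
  have hder : HasDerivAt (fun s : ℝ => 1 - exp (-s)) 1 0 := by
    have h1 : HasDerivAt (fun s : ℝ => -s) (-1) 0 := (hasDerivAt_id 0).neg
    have h2 := h1.exp
    have h3 := h2.const_sub 1
    simpa using h3
  have hslope := hasDerivAt_iff_tendsto_slope.mp hder
  have hsub : Tendsto (fun c : ℝ => t / c) atTop (nhdsWithin 0 {(0:ℝ)}ᶜ) := by
    rw [tendsto_nhdsWithin_iff]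
    constructor
    · exact tendsto_const_nhds.div_atTop tendsto_id
    · filter_upwards [eventually_gt_atTop 0] with c hc
      exact (div_pos ht hc).ne'
  have hcomp : Tendsto (fun c : ℝ => slope (fun s : ℝ => 1 - exp (-s)) 0 (t / c)) atTop (nhds 1) :=
    hslope.comp hsub
  have := hcomp.const_mul t
  rw [mul_one] at this
  apply this.congr'
  filter_upwards [eventually_gt_atTop 0] with c hc
  have hne : t / c ≠ 0 := (div_pos ht hc).ne'
  rw [slope_def_field]
  simp only [neg_zero, exp_zero, sub_self, sub_zero]
  field_simp

lemma hlpr_AT : ∀ (N₁ N₂ b₁ b₂ : ℝ), 0 < N₁ → 0 < N₂ → 0 < b₁ → 0 < b₂ →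
    (2:ℝ) ^ ((b₁+b₂)/N₂) * ((2:ℝ) ^ (b₁/N₁)) ^ (-(N₁/N₂)) = (2:ℝ) ^ (b₂/N₂) := by
  intro N₁ N₂ b₁ b₂ hN₁ hN₂ hb₁ hb₂
  rw [← Real.rpow_mul (by norm_num), ← Real.rpow_add (by norm_num)]
  congr 1
  field_simp
  ring

lemma hlpr_g_bounds {N₁ N₂ b₁ b₂ u : ℝ} (hN₁ : 0 < N₁) (hN₂ : 0 < N₂) (hb₁ : 0 < b₁)
    (hb₂ : 0 < b₂) (hu1 : 0 ≤ u) (hu2 : u ≤ (2:ℝ) ^ (b₁/N₁) - 1) :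
    0 < (2:ℝ) ^ ((b₁+b₂)/N₂) * (1+u) ^ (-(N₁/N₂)) - 1 ∧
      (2:ℝ) ^ ((b₁+b₂)/N₂) * (1+u) ^ (-(N₁/N₂)) - 1 ≤ (2:ℝ) ^ ((b₁+b₂)/N₂) - 1 := by
  have hA : (0:ℝ) < (2:ℝ) ^ ((b₁+b₂)/N₂) := Real.rpow_pos_of_pos (by norm_num) _
  have h1u : (1:ℝ) ≤ 1 + u := by linarith
  have hup : (1+u) ^ (-(N₁/N₂)) ≤ 1 :=
    Real.rpow_le_one_of_one_le_of_nonpos h1u (neg_nonpos_of_nonneg (by positivity))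
  have hlow : ((2:ℝ) ^ (b₁/N₁)) ^ (-(N₁/N₂)) ≤ (1+u) ^ (-(N₁/N₂)) := by
    apply Real.rpow_le_rpow_of_nonpos (by linarith) (by linarith)
    exact neg_nonpos_of_nonneg (by positivity)
  have hmid : (1:ℝ) < (2:ℝ) ^ (b₂/N₂) :=
    Real.one_lt_rpow_iff_of_pos (by norm_num) |>.mpr (Or.inl ⟨one_lt_two, by positivity⟩)
  constructor
  · have : (2:ℝ) ^ (b₂/N₂) ≤ (2:ℝ) ^ ((b₁+b₂)/N₂) * (1+u) ^ (-(N₁/N₂)) := by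
      rw [← hlpr_AT N₁ N₂ b₁ b₂ hN₁ hN₂ hb₁ hb₂]
      exact mul_le_mul_of_nonneg_left hlow hA.le
    linarith
  · nlinarith

lemma hlpr_meas_logb (a : ℝ) : Measurable (fun x : ℝ => Real.logb 2 (1 + a * x)) := by
  simp only [Real.logb]
  exact (Real.measurable_log.comp (by fun_prop)).div_const _

lemma hlpr_measure_eq {N₁ N₂ b₁ b₂ a c : ℝ} (hN₁ : 0 < N₁) (hN₂ : 0 < N₂)
    (hb₁ : 0 < b₁) (hb₂ : 0 < b₂) (ha : 0 < a) (hc : 0 < c) :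
    (a * c) * (((expMeasure 1).prod (expMeasure 1))
        {p : ℝ × ℝ | N₁ * logb 2 (1 + a * p.1) < b₁ ∧
          N₁ * logb 2 (1 + a * p.1) + N₂ * logb 2 (1 + c * p.2) < b₁ + b₂}).toReal
    = ∫ u in Ioi (0:ℝ),
        Set.indicator (Ioo 0 ((2:ℝ) ^ (b₁/N₁) - 1))
          (fun u => c * (1 - exp (-(((2:ℝ) ^ ((b₁+b₂)/N₂) * (1+u) ^ (-(N₁/N₂)) - 1) / c)))
            * exp (-(u/a))) u := by
  haveI : IsProbabilityMeasure (expMeasure 1) := isProbabilityMeasure_expMeasure one_pos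
  set T : ℝ := (2:ℝ) ^ (b₁/N₁) with hTdef
  set A : ℝ := (2:ℝ) ^ ((b₁+b₂)/N₂) with hAdef
  have hT1 : (1:ℝ) < T := one_lt_rpow_iff_of_pos (by norm_num) |>.mpr
    (Or.inl ⟨one_lt_two, by positivity⟩)
  set w : ℝ := (T - 1)/a with hwdef
  have hw : 0 < w := div_pos (by linarith) ha
  set φ : ℝ → ℝ := Set.indicator (Ioo 0 w)
    (fun x => 1 - exp (-((A * (1 + a*x) ^ (-(N₁/N₂)) - 1)/c))) with hφdef
  set ψ : ℝ → ℝ := Set.indicator (Ioo 0 w)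
    (fun x => exp (-x) * (1 - exp (-((A * (1 + a*x) ^ (-(N₁/N₂)) - 1)/c)))) with hψdef
  set S : Set (ℝ × ℝ) := {p : ℝ × ℝ | N₁ * logb 2 (1 + a * p.1) < b₁ ∧
      N₁ * logb 2 (1 + a * p.1) + N₂ * logb 2 (1 + c * p.2) < b₁ + b₂} with hSdef
  have m1 : Measurable (fun p : ℝ × ℝ => N₁ * logb 2 (1 + a * p.1)) :=
    ((hlpr_meas_logb a).comp measurable_fst).const_mul N₁
  have m2 : Measurable (fun p : ℝ × ℝ => N₂ * logb 2 (1 + c * p.2)) :=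
    ((hlpr_meas_logb c).comp measurable_snd).const_mul N₂
  have hS : MeasurableSet S := by
    rw [hSdef, Set.setOf_and]
    exact (measurableSet_lt m1 measurable_const).inter
      (measurableSet_lt (m1.add m2) measurable_const)
  -- sections
  have hae0 : ∀ᵐ x ∂ expMeasure 1, 0 < x := by
    have h2 : ∀ᵐ x ∂ expMeasure 1, x ≠ 0 := by
      rw [ae_iff]
      have hz : {x : ℝ | ¬ x ≠ 0} = {0} := by ext x; simp
      rw [hz]
      exact (withDensity_absolutelyContinuous volume (exponentialPDF 1)) Real.volume_singleton
    filter_upwards [hlpr_ae_nonneg, h2] with x h1 h2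
    exact lt_of_le_of_ne h1 (Ne.symm h2)
  have hsec : ∀ᵐ x ∂ expMeasure 1,
      expMeasure 1 (Prod.mk x ⁻¹' S) = ENNReal.ofReal (φ x) := by
    filter_upwards [hae0] with x hx
    by_cases hxw : x < w
    · have hax : a * x < T - 1 := (lt_div_iff₀' ha).mp hxw
      have hpos : 0 < 1 + a * x := by nlinarith
      have hP : N₁ * logb 2 (1 + a * x) < b₁ := by
        rw [← lt_div_iff₀' hN₁]
        exact (Real.logb_lt_iff_lt_rpow one_lt_two hpos).mpr (by rw [← hTdef]; linarith)
      have hs : 0 < b₁ + b₂ - N₁ * logb 2 (1 + a * x) := by linarith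
      have hset : Prod.mk x ⁻¹' S = {y : ℝ | N₂ * logb 2 (1 + c * y)
          < b₁ + b₂ - N₁ * logb 2 (1 + a * x)} := by
        ext y
        simp only [hSdef, Set.mem_preimage, Set.mem_setOf_eq]
        constructor
        · rintro ⟨-, h⟩; linarith
        · intro h; exact ⟨hP, by linarith⟩
      rw [hset, hlpr_nu_cond hN₂ hc hs]
      have hrw : (2:ℝ) ^ ((b₁ + b₂ - N₁ * logb 2 (1 + a * x)) / N₂)
          = A * (1 + a*x) ^ (-(N₁/N₂)) := by
        have h1 : (b₁ + b₂ - N₁ * logb 2 (1 + a * x)) / N₂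
            = (b₁+b₂)/N₂ + logb 2 (1 + a*x) * (-(N₁/N₂)) := by ring
        rw [h1, Real.rpow_add two_pos, Real.rpow_mul (by norm_num : (0:ℝ) ≤ 2),
          Real.rpow_logb two_pos (by norm_num) hpos, hAdef]
      rw [hrw, hφdef, Set.indicator_of_mem (Set.mem_Ioo.mpr ⟨hx, hxw⟩)]
    · push_neg at hxw
      have hax : T - 1 ≤ a * x := (div_le_iff₀' ha).mp hxw
      have hpos : 0 < 1 + a * x := by nlinarith
      have hP : ¬ (N₁ * logb 2 (1 + a * x) < b₁) := by
        push_neg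
        rw [← div_le_iff₀' hN₁]
        exact (Real.le_logb_iff_rpow_le one_lt_two hpos).mpr (by rw [← hTdef]; linarith)
      have hset : Prod.mk x ⁻¹' S = ∅ := by
        ext y
        simp only [hSdef, Set.mem_preimage, Set.mem_setOf_eq, Set.mem_empty_iff_false,
          iff_false, not_and]
        intro h; exact absurd h hP
      rw [hset, measure_empty, hφdef,
        Set.indicator_of_notMem (fun h => absurd h.2 (not_lt.mpr hxw)), ENNReal.ofReal_zero]
  have hφinner : Measurable (fun x : ℝ => 1 - exp (-((A * (1 + a*x) ^ (-(N₁/N₂)) - 1)/c))) := by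
    fun_prop
  have hφmeas : Measurable φ := hφinner.indicator measurableSet_Ioo
  have hψmeas : Measurable ψ := by
    apply Measurable.indicator _ measurableSet_Ioo
    fun_prop
  have hg : ∀ x ∈ Ioo (0:ℝ) w, 0 ≤ 1 - exp (-((A * (1 + a*x) ^ (-(N₁/N₂)) - 1)/c)) := by
    intro x hx
    have h1 : 0 ≤ a * x := (mul_pos ha hx.1).le
    have h2 : a * x ≤ T - 1 := ((lt_div_iff₀' ha).mp hx.2).le
    have := (hlpr_g_bounds hN₁ hN₂ hb₁ hb₂ h1 h2).1
    have hexp : exp (-((A * (1 + a*x) ^ (-(N₁/N₂)) - 1)/c)) ≤ 1 := by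
      rw [Real.exp_le_one_iff]
      have h3 : 0 ≤ (A * (1 + a*x) ^ (-(N₁/N₂)) - 1)/c := le_of_lt (div_pos this hc)
      linarith
    linarith
  -- measure computation
  have h5 : (((expMeasure 1).prod (expMeasure 1)) S).toReal = ∫ x, ψ x := by
    have h2 : ((expMeasure 1).prod (expMeasure 1)) S
        = ∫⁻ x, ENNReal.ofReal (φ x) ∂ expMeasure 1 :=
      (Measure.prod_apply hS).trans (lintegral_congr_ae hsec)
    have h3 : ∫⁻ x, ENNReal.ofReal (φ x) ∂ expMeasure 1
        = ∫⁻ x, exponentialPDF 1 x * ENNReal.ofReal (φ x) ∂ volume := by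
      rw [show (expMeasure 1) = volume.withDensity (exponentialPDF 1) from rfl]
      exact lintegral_withDensity_eq_lintegral_mul volume
        ((measurable_exponentialPDFReal 1).ennreal_ofReal) hφmeas.ennreal_ofReal
    have h4 : ∫⁻ x, exponentialPDF 1 x * ENNReal.ofReal (φ x) ∂ volume
        = ∫⁻ x, ENNReal.ofReal (ψ x) ∂ volume := by
      apply lintegral_congr_ae
      have h0 : ∀ᵐ (x:ℝ), x ≠ (0:ℝ) := by
        rw [ae_iff]
        have hz : {x : ℝ | ¬ x ≠ 0} = {0} := by ext x; simp
        rw [hz]; exact Real.volume_singleton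
      filter_upwards [h0] with x hx0
      rcases lt_trichotomy x 0 with hx | hx | hx
      · rw [exponentialPDF_of_neg hx, zero_mul, hψdef,
          Set.indicator_of_notMem (fun h => absurd h.1 (not_lt.mpr hx.le)),
          ENNReal.ofReal_zero]
      · exact absurd hx hx0
      · rw [exponentialPDF_of_nonneg hx.le]; simp only [one_mul]
        by_cases hxw : x ∈ Ioo (0:ℝ) w
        · rw [hψdef, Set.indicator_of_mem hxw, hφdef, Set.indicator_of_mem hxw,
            ← ENNReal.ofReal_mul (exp_nonneg _)]
        · rw [hψdef, Set.indicator_of_notMem hxw, hφdef, Set.indicator_of_notMem hxw,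
            ENNReal.ofReal_zero, mul_zero]
    rw [h2, h3, h4]
    rw [integral_eq_lintegral_of_nonneg_ae ?_ hψmeas.aestronglyMeasurable]
    · apply Filter.Eventually.of_forall
      intro x
      rw [hψdef]
      by_cases hxw : x ∈ Ioo (0:ℝ) w
      · rw [Set.indicator_of_mem hxw]
        exact mul_nonneg (exp_nonneg _) (hg x hxw)
      · rw [Set.indicator_of_notMem hxw]
        exact le_rfl
  -- substitution step
  rw [h5]
  set Fu : ℝ → ℝ := fun u => c * (1 - exp (-((A * (1+u) ^ (-(N₁/N₂)) - 1) / c)))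
      * exp (-(u/a)) with hFu
  set h : ℝ → ℝ := Set.indicator (Ioo 0 (T - 1)) Fu with hhdef
  have hsub : ∫ x in Ioi (0:ℝ), h (a * x) = a⁻¹ • ∫ x in Ioi (0:ℝ), h x := by
    have := integral_comp_mul_left_Ioi h 0 ha
    rwa [mul_zero] at this
  have hmem : ∀ x : ℝ, x ∈ Ioo (0:ℝ) w ↔ a * x ∈ Ioo (0:ℝ) (T-1) := by
    intro x
    constructor
    · exact fun hx => ⟨mul_pos ha hx.1, (lt_div_iff₀' ha).mp hx.2⟩
    · intro hx
      have hx1 : 0 < x := by nlinarith [hx.1]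
      exact ⟨hx1, (lt_div_iff₀' ha).mpr hx.2⟩
  have hcomp : (fun x => h (a * x)) = Set.indicator (Ioo 0 w) (fun x => Fu (a*x)) := by
    funext x
    by_cases hx : x ∈ Ioo (0:ℝ) w
    · rw [Set.indicator_of_mem hx, hhdef, Set.indicator_of_mem ((hmem x).mp hx)]
    · rw [Set.indicator_of_notMem hx, hhdef,
        Set.indicator_of_notMem (fun hax => hx ((hmem x).mpr hax))]
  have h6 : ∫ x in Ioi (0:ℝ), h (a * x) = ∫ x in Ioo (0:ℝ) w, Fu (a*x) := by
    rw [hcomp, integral_indicator measurableSet_Ioo,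
      Measure.restrict_restrict measurableSet_Ioo,
      Set.inter_eq_left.mpr Set.Ioo_subset_Ioi_self]
  have h7 : Set.EqOn (fun x => Fu (a*x))
      (fun x => c * (exp (-x) * (1 - exp (-((A * (1 + a*x) ^ (-(N₁/N₂)) - 1)/c)))))
      (Ioo (0:ℝ) w) := by
    intro x hx
    simp only [hFu]
    rw [mul_div_cancel_left₀ x ha.ne']
    ring
  have h8 : ∫ x in Ioo (0:ℝ) w, Fu (a*x) = c * ∫ x, ψ x := by
    rw [setIntegral_congr_fun measurableSet_Ioo h7, integral_const_mul, hψdef,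
      integral_indicator measurableSet_Ioo]
  have h9 : ∫ u in Ioi (0:ℝ), h u = (a * c) * ∫ x, ψ x := by
    calc ∫ u in Ioi (0:ℝ), h u = a • (a⁻¹ • ∫ u in Ioi (0:ℝ), h u) := by
          rw [smul_smul, mul_inv_cancel₀ ha.ne', one_smul]
      _ = a • ∫ x in Ioi (0:ℝ), h (a * x) := by rw [hsub]
      _ = a * (c * ∫ x, ψ x) := by rw [smul_eq_mul, h6, h8]
      _ = (a * c) * ∫ x, ψ x := by ring
  rw [h9]

lemma hlpr_limit_integral {N₁ N₂ b₁ b₂ : ℝ} (hN₁ : 0 < N₁) (hN₂ : 0 < N₂)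
    (hb₁ : 0 < b₁) (hb₂ : 0 < b₂) (hNe : N₁ ≠ N₂) :
    ∫ u in Ioi (0:ℝ), Set.indicator (Ioo 0 ((2:ℝ) ^ (b₁/N₁) - 1))
        (fun u => (2:ℝ) ^ ((b₁+b₂)/N₂) * (1+u) ^ (-(N₁/N₂)) - 1) u
    = (N₂ / (N₂ - N₁)) * ((2:ℝ) ^ (b₁ / N₁ + b₂ / N₂)
        - (2:ℝ) ^ ((b₁ + b₂) / N₂)) - (2:ℝ) ^ (b₁ / N₁) + 1 := by
  set T : ℝ := (2:ℝ) ^ (b₁/N₁) with hTdef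
  set A : ℝ := (2:ℝ) ^ ((b₁+b₂)/N₂) with hAdef
  set β : ℝ := N₁/N₂ with hβdef
  have hT1 : (1:ℝ) < T := one_lt_rpow_iff_of_pos (by norm_num) |>.mpr
    (Or.inl ⟨one_lt_two, by positivity⟩)
  have hβ1 : 1 - β ≠ 0 := by
    rw [hβdef, sub_ne_zero]
    intro hcon
    exact hNe (by field_simp at hcon; linarith)
  have hne2 : N₂ - N₁ ≠ 0 := sub_ne_zero.mpr (Ne.symm hNe)
  have h1 : ∫ u in Ioi (0:ℝ), Set.indicator (Ioo 0 (T - 1))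
      (fun u => A * (1+u) ^ (-β) - 1) u
      = ∫ u in (0:ℝ)..(T-1), (A * (1+u) ^ (-β) - 1) := by
    rw [integral_indicator measurableSet_Ioo,
      Measure.restrict_restrict measurableSet_Ioo,
      Set.inter_eq_left.mpr Set.Ioo_subset_Ioi_self,
      intervalIntegral.integral_of_le (by linarith : (0:ℝ) ≤ T-1),
      integral_Ioc_eq_integral_Ioo]
  have hF : ∀ u ∈ Set.uIcc (0:ℝ) (T-1),
      HasDerivAt (fun u : ℝ => A/(1-β) * (1+u) ^ (1-β) - u) (A * (1+u) ^ (-β) - 1) u := by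
    intro u hu
    rw [Set.uIcc_of_le (by linarith : (0:ℝ) ≤ T-1)] at hu
    have hu0 : (0:ℝ) ≤ u := hu.1
    have hne : (1:ℝ) + u ≠ 0 := by positivity
    have hrpow : HasDerivAt (fun y : ℝ => y ^ (1-β)) ((1-β) * (1+u) ^ (1-β-1)) (1+u) :=
      Real.hasDerivAt_rpow_const (Or.inl hne)
    have hin : HasDerivAt (fun u : ℝ => (1:ℝ)+u) 1 u := (hasDerivAt_id u).const_add 1
    have hcomp := hrpow.comp u hin
    have h2 := (hcomp.const_mul (A/(1-β))).sub (hasDerivAt_id u)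
    convert h2 using 1
    · rfl
    · rfl
    · rfl
    have hexp : (1:ℝ)-β-1 = -β := by ring
    rw [hexp]
    field_simp
  have hcont : IntervalIntegrable (fun u : ℝ => A * (1+u) ^ (-β) - 1) volume 0 (T-1) := by
    apply ContinuousOn.intervalIntegrable
    apply ContinuousOn.sub _ continuousOn_const
    apply ContinuousOn.mul continuousOn_const
    apply ContinuousOn.rpow_const (by fun_prop)
    intro u hu
    rw [Set.uIcc_of_le (by linarith : (0:ℝ) ≤ T-1)] at hu
    exact Or.inl (by have := hu.1; positivity)
  have h2 := intervalIntegral.integral_eq_sub_of_hasDerivAt hF hcont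
  rw [h1, h2]
  have hTT : (1:ℝ) + (T - 1) = T := by ring
  have h10 : (1:ℝ) + (0:ℝ) = 1 := by ring
  rw [hTT, h10, Real.one_rpow]
  have hX : A * T ^ (1-β) = (2:ℝ) ^ (b₁ / N₁ + b₂ / N₂) := by
    rw [hTdef, hAdef, ← Real.rpow_mul (by norm_num : (0:ℝ) ≤ 2),
      ← Real.rpow_add (by norm_num : (0:ℝ) < 2)]
    congr 1
    rw [hβdef]
    field_simp
    ring
  have hbeta : 1 - β = (N₂ - N₁)/N₂ := by rw [hβdef]; field_simp
  rw [← hX, hbeta]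
  field_simp
  ring

lemma hlpr_dct {N₁ N₂ b₁ b₂ q₁ q₂ σ2 : ℝ} (hN₁ : 0 < N₁) (hN₂ : 0 < N₂)
    (hb₁ : 0 < b₁) (hb₂ : 0 < b₂) (hq₁ : 0 < q₁) (hq₂ : 0 < q₂) (hσ : 0 < σ2) :
    Filter.Tendsto (fun ρ : ℝ => ∫ u in Ioi (0:ℝ),
        Set.indicator (Ioo 0 ((2:ℝ) ^ (b₁/N₁) - 1))
          (fun u => (q₂ * ρ / σ2) * (1 - exp (-(((2:ℝ) ^ ((b₁+b₂)/N₂) * (1+u) ^ (-(N₁/N₂)) - 1)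
              / (q₂ * ρ / σ2)))) * exp (-(u / (q₁ * ρ / σ2)))) u)
      Filter.atTop
      (nhds (∫ u in Ioi (0:ℝ), Set.indicator (Ioo 0 ((2:ℝ) ^ (b₁/N₁) - 1))
          (fun u => (2:ℝ) ^ ((b₁+b₂)/N₂) * (1+u) ^ (-(N₁/N₂)) - 1) u)) := by
  set T : ℝ := (2:ℝ) ^ (b₁/N₁) with hTdef
  set A : ℝ := (2:ℝ) ^ ((b₁+b₂)/N₂) with hAdef
  have hA : (0:ℝ) < A := Real.rpow_pos_of_pos (by norm_num) _
  have haρ : Filter.Tendsto (fun ρ : ℝ => q₁ * ρ / σ2) Filter.atTop Filter.atTop :=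
    Filter.Tendsto.atTop_div_const hσ (tendsto_id.const_mul_atTop hq₁)
  have hcρ : Filter.Tendsto (fun ρ : ℝ => q₂ * ρ / σ2) Filter.atTop Filter.atTop :=
    Filter.Tendsto.atTop_div_const hσ (tendsto_id.const_mul_atTop hq₂)
  apply MeasureTheory.tendsto_integral_filter_of_dominated_convergence
    (Set.indicator (Ioo 0 (T - 1)) (fun _ => A))
  · apply Filter.Eventually.of_forall
    intro ρ
    exact (Measurable.indicator (by fun_prop) measurableSet_Ioo).aestronglyMeasurable
  · filter_upwards [haρ.eventually_gt_atTop 0, hcρ.eventually_gt_atTop 0] with ρ ha hc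
    apply MeasureTheory.ae_of_all
    intro u
    by_cases hu : u ∈ Ioo (0:ℝ) (T - 1)
    · rw [Set.indicator_of_mem hu, Set.indicator_of_mem hu]
      obtain ⟨ht0, htA⟩ := hlpr_g_bounds hN₁ hN₂ hb₁ hb₂ hu.1.le hu.2.le
      rw [← hAdef] at htA
      set t : ℝ := A * (1+u) ^ (-(N₁/N₂)) - 1
      set c : ℝ := q₂ * ρ / σ2
      set a : ℝ := q₁ * ρ / σ2
      have htc : 0 ≤ t / c := div_nonneg ht0.le hc.le
      have h1 : 0 ≤ 1 - exp (-(t/c)) := by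
        have := Real.exp_le_one_iff.mpr (neg_nonpos_of_nonneg htc)
        linarith
      have h2 : c * (1 - exp (-(t/c))) ≤ t := by
        have h3 : 1 - exp (-(t/c)) ≤ t / c := hlpr_one_sub_exp_le
        calc c * (1 - exp (-(t/c))) ≤ c * (t/c) := by
              exact mul_le_mul_of_nonneg_left h3 hc.le
          _ = t := by field_simp
      have h4 : exp (-(u/a)) ≤ 1 :=
        Real.exp_le_one_iff.mpr (neg_nonpos_of_nonneg (div_nonneg hu.1.le ha.le))
      have h5 : 0 ≤ c * (1 - exp (-(t/c))) * exp (-(u/a)) :=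
        mul_nonneg (mul_nonneg hc.le h1) (exp_nonneg _)
      rw [Real.norm_eq_abs, abs_of_nonneg h5]
      calc c * (1 - exp (-(t/c))) * exp (-(u/a)) ≤ t * 1 := by
            apply mul_le_mul h2 h4 (exp_nonneg _) ht0.le
        _ ≤ A := by linarith
    · rw [Set.indicator_of_notMem hu, Set.indicator_of_notMem hu]
      simp
  · rw [MeasureTheory.integrable_indicator_iff measurableSet_Ioo]
    apply (MeasureTheory.integrableOn_const_iff).mpr
    right
    rw [Measure.restrict_apply measurableSet_Ioo]
    exact lt_of_le_of_lt (measure_mono Set.inter_subset_left) measure_Ioo_lt_top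
  · apply MeasureTheory.ae_of_all
    intro u
    by_cases hu : u ∈ Ioo (0:ℝ) (T - 1)
    · simp only [Set.indicator_of_mem hu]
      obtain ⟨ht0, htA⟩ := hlpr_g_bounds hN₁ hN₂ hb₁ hb₂ hu.1.le hu.2.le
      have hf1 : Filter.Tendsto (fun ρ : ℝ => (q₂ * ρ / σ2) *
          (1 - exp (-((A * (1+u) ^ (-(N₁/N₂)) - 1) / (q₂ * ρ / σ2))))) Filter.atTop
          (nhds (A * (1+u) ^ (-(N₁/N₂)) - 1)) :=
        (hlpr_tendsto_c_mul ht0).comp hcρ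
      have h0 : Filter.Tendsto (fun ρ : ℝ => u / (q₁ * ρ / σ2)) Filter.atTop (nhds 0) :=
        tendsto_const_nhds.div_atTop haρ
      have hf2 : Filter.Tendsto (fun ρ : ℝ => exp (-(u / (q₁ * ρ / σ2)))) Filter.atTop
          (nhds 1) := by
        have := (Real.continuous_exp.tendsto (-0)).comp h0.neg
        simpa [Function.comp_def] using this
      have := hf1.mul hf2
      simpa using this
    · simp only [Set.indicator_of_notMem hu]
      exact tendsto_const_nhds

/-- **High-SNR asymptotic two-round outage probability of VL-XP-HARQ** (Theorem 2, `K = 2`):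
with `P₁ = q₁ρ`, `P₂ = q₂ρ` and `ρ → ∞`,
`(P₁P₂/σ⁴)·p_{out,2} → (N₂/(N₂−N₁))·(2^{b₁/N₁+b₂/N₂} − 2^{(b₁+b₂)/N₂}) − 2^{b₁/N₁} + 1`. -/
theorem outage_prob_two_rounds_asymptotic
    {Ω : Type*} [MeasurableSpace Ω] (μ : Measure Ω) [IsProbabilityMeasure μ]
    (X₁ X₂ : Ω → ℝ) (hX₁ : Measurable X₁) (hX₂ : Measurable X₂)
    (hindep : IndepFun X₁ X₂ μ)
    (hlaw₁ : μ.map X₁ = expMeasure 1) (hlaw₂ : μ.map X₂ = expMeasure 1)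
    (σ2 N₁ N₂ b₁ b₂ q₁ q₂ : ℝ) (hσ : 0 < σ2)
    (hN₁ : 0 < N₁) (hN₂ : 0 < N₂) (hNe : N₁ ≠ N₂)
    (hb₁ : 0 < b₁) (hb₂ : 0 < b₂) (hq₁ : 0 < q₁) (hq₂ : 0 < q₂) :
    Tendsto (fun ρ : ℝ =>
        ((q₁ * ρ) * (q₂ * ρ) / σ2 ^ 2) *
          (μ {ω | N₁ * logb 2 (1 + X₁ ω * (q₁ * ρ) / σ2) < b₁ ∧
              N₁ * logb 2 (1 + X₁ ω * (q₁ * ρ) / σ2)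
                + N₂ * logb 2 (1 + X₂ ω * (q₂ * ρ) / σ2) < b₁ + b₂}).toReal)
      atTop
      (nhds ((N₂ / (N₂ - N₁)) * ((2 : ℝ) ^ (b₁ / N₁ + b₂ / N₂)
          - (2 : ℝ) ^ ((b₁ + b₂) / N₂)) - (2 : ℝ) ^ (b₁ / N₁) + 1)) := by
  haveI : IsProbabilityMeasure (expMeasure 1) := isProbabilityMeasure_expMeasure one_pos
  have hmap : μ.map (fun ω => (X₁ ω, X₂ ω)) = (expMeasure 1).prod (expMeasure 1) := by
    rw [(ProbabilityTheory.indepFun_iff_map_prod_eq_prod_map_map hX₁.aemeasurable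
      hX₂.aemeasurable).mp hindep, hlaw₁, hlaw₂]
  have hlim := hlpr_dct hN₁ hN₂ hb₁ hb₂ hq₁ hq₂ hσ
  rw [hlpr_limit_integral hN₁ hN₂ hb₁ hb₂ hNe] at hlim
  apply Filter.Tendsto.congr' _ hlim
  filter_upwards [Filter.eventually_gt_atTop 0] with ρ hρ
  have ha : 0 < q₁ * ρ / σ2 := by positivity
  have hc : 0 < q₂ * ρ / σ2 := by positivity
  set S : Set (ℝ × ℝ) := {p : ℝ × ℝ | N₁ * logb 2 (1 + (q₁ * ρ / σ2) * p.1) < b₁ ∧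
      N₁ * logb 2 (1 + (q₁ * ρ / σ2) * p.1)
        + N₂ * logb 2 (1 + (q₂ * ρ / σ2) * p.2) < b₁ + b₂} with hSdef
  have m1 : Measurable (fun p : ℝ × ℝ => N₁ * logb 2 (1 + (q₁ * ρ / σ2) * p.1)) :=
    ((hlpr_meas_logb (q₁ * ρ / σ2)).comp measurable_fst).const_mul N₁
  have m2 : Measurable (fun p : ℝ × ℝ => N₂ * logb 2 (1 + (q₂ * ρ / σ2) * p.2)) :=
    ((hlpr_meas_logb (q₂ * ρ / σ2)).comp measurable_snd).const_mul N₂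
  have hS : MeasurableSet S := by
    rw [hSdef, Set.setOf_and]
    exact (measurableSet_lt m1 measurable_const).inter
      (measurableSet_lt (m1.add m2) measurable_const)
  have e1 : ∀ x : ℝ, x * (q₁ * ρ) / σ2 = q₁ * ρ / σ2 * x := fun x => by ring
  have e2 : ∀ x : ℝ, x * (q₂ * ρ) / σ2 = q₂ * ρ / σ2 * x := fun x => by ring
  have hE : {ω | N₁ * logb 2 (1 + X₁ ω * (q₁ * ρ) / σ2) < b₁ ∧
      N₁ * logb 2 (1 + X₁ ω * (q₁ * ρ) / σ2)
        + N₂ * logb 2 (1 + X₂ ω * (q₂ * ρ) / σ2) < b₁ + b₂}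
      = (fun ω => (X₁ ω, X₂ ω)) ⁻¹' S := by
    ext ω
    simp only [hSdef, Set.mem_setOf_eq, Set.mem_preimage, e1, e2]
  have hμ : μ {ω | N₁ * logb 2 (1 + X₁ ω * (q₁ * ρ) / σ2) < b₁ ∧
      N₁ * logb 2 (1 + X₁ ω * (q₁ * ρ) / σ2)
        + N₂ * logb 2 (1 + X₂ ω * (q₂ * ρ) / σ2) < b₁ + b₂}
      = ((expMeasure 1).prod (expMeasure 1)) S := by
    rw [hE, ← Measure.map_apply (hX₁.prodMk hX₂) hS, hmap]
  have hkey := hlpr_measure_eq (a := q₁ * ρ / σ2) (c := q₂ * ρ / σ2) hN₁ hN₂ hb₁ hb₂ ha hc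
  rw [hμ, show (q₁ * ρ) * (q₂ * ρ) / σ2 ^ 2 = (q₁ * ρ / σ2) * (q₂ * ρ / σ2) by ring]
  exact hkey.symm
end

section
/- Fix K ≥ 1, pairwise distinct positive reals N₁,…,N_K, positive reals b₁,…,b_K with cumulative sums B_k = Σ_{l=1}^k b_l, and define functions ħ_k : (0, 2^{B_k}] → ℝ recursively by ħ_K(x) = N_K·(2^{B_K/N_K} − x^{1/N_K}) and, for 1 ≤ k < K, ħ_k(x) = ∫_x^{2^{B_k}} t^{1/N_k − 1/N_{k+1} − 1}·ħ_{k+1}(t) dt. Then for every k and every x ∈ (0, 2^{B_k}], ħ_k(x) = (−1)^{K−k+1}·(Π_{i=k}^{K} N_i)·x^{1/N_k} + Σ_{i=0}^{K−k} c_{k,i}·x^{1/N_k − 1/N_{k+i}}, where the coefficients satisfy c_{K,0} = N_K·2^{B_K/N_K}, c_{k,i} = −(N_{k+i}·N_k/(N_{k+i}−N_k))·c_{k+1,i−1} for 1 ≤ i ≤ K−k, and c_{k,0} = (−1)^{K−k}·(Π_{i=k}^{K} N_i)·2^{B_k/N_k} + Σ_{i=1}^{K−k} c_{k+1,i−1}·(N_{k+i}·N_k/(N_{k+i}−N_k))·2^{B_k/N_k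 − B_k/N_{k+i}}. -/
open MeasureTheory Real

/-- The iterated integrals `ħ_{K,k}` arising as the high-SNR leading coefficient of the
`K`-round outage probability of VL-XP-HARQ, written with fuel `j = K − k`:
`hbarAux N B K 0 x = ħ_{K,K}(x) = N_K(2^{B_K/N_K} − x^{1/N_K})` and
`hbarAux N B K (j+1) x = ħ_{K,K−j−1}(x)
  = ∫_x^{2^{B_{K−j−1}}} t^{1/N_{K−j−1} − 1/N_{K−j} − 1} ħ_{K,K−j}(t) dt`. -/
noncomputable def hbarAux (N B : ℕ → ℝ) (K : ℕ) : ℕ → ℝ → ℝ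
  | 0, x => N K * ((2 : ℝ) ^ (B K / N K) - x ^ (1 / N K))
  | (j + 1), x =>
      ∫ t in Set.Ioo x ((2 : ℝ) ^ (B (K - (j + 1)))),
        t ^ (1 / N (K - (j + 1)) - 1 / N (K - j) - 1) * hbarAux N B K j t

/-- The coefficients `c_{k,i}` of the closed form of `ħ_{K,k}`, written with fuel
`j = K − k` (so `coefAux N B K (K−k) i = c_{k,i}`): `c_{K,0} = N_K·2^{B_K/N_K}`,
`c_{k,i} = −(N_{k+i}N_k/(N_{k+i}−N_k))·c_{k+1,i−1}` for `1 ≤ i ≤ K−k`, and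
`c_{k,0} = (−1)^{K−k}(Π_{i=k}^K N_i)·2^{B_k/N_k}
  + Σ_{i=1}^{K−k} c_{k+1,i−1}·(N_{k+i}N_k/(N_{k+i}−N_k))·2^{B_k/N_k − B_k/N_{k+i}}`. -/
noncomputable def coefAux (N B : ℕ → ℝ) (K : ℕ) : ℕ → ℕ → ℝ
  | 0, 0 => N K * (2 : ℝ) ^ (B K / N K)
  | 0, _ + 1 => 0
  | (j + 1), (i + 1) =>
      -(N (K - (j + 1) + (i + 1)) * N (K - (j + 1))
          / (N (K - (j + 1) + (i + 1)) - N (K - (j + 1)))) * coefAux N B K j i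
  | (j + 1), 0 =>
      (-1 : ℝ) ^ (j + 1) * (∏ i ∈ Finset.Icc (K - (j + 1)) K, N i)
          * (2 : ℝ) ^ (B (K - (j + 1)) / N (K - (j + 1)))
        + ∑ i ∈ Finset.Icc 1 (j + 1),
            coefAux N B K j (i - 1)
              * (N (K - (j + 1) + i) * N (K - (j + 1))
                  / (N (K - (j + 1) + i) - N (K - (j + 1))))
              * (2 : ℝ) ^ (B (K - (j + 1)) / N (K - (j + 1))
                  - B (K - (j + 1)) / N (K - (j + 1) + i))

lemma integrableOn_rpow_Ioo' {x y p : ℝ} (hx : 0 < x) :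
    MeasureTheory.IntegrableOn (fun t : ℝ => t ^ p) (Set.Ioo x y) := by
  refine (ContinuousOn.integrableOn_Icc ?_).mono_set Set.Ioo_subset_Icc_self
  exact continuousOn_id.rpow_const fun t ht => Or.inl (ne_of_gt (lt_of_lt_of_le hx ht.1))

lemma integral_rpow_Ioo' {x y p : ℝ} (hx : 0 < x) (hxy : x ≤ y) (hp : p ≠ 0) :
    ∫ t in Set.Ioo x y, t ^ (p - 1) = (y ^ p - x ^ p) / p := by
  rw [← MeasureTheory.integral_Ioc_eq_integral_Ioo, ← intervalIntegral.integral_of_le hxy,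
    integral_rpow (Or.inr ⟨fun h => hp (by linarith), Set.notMem_uIcc_of_lt hx (lt_of_lt_of_le hx hxy)⟩)]
  have h1 : p - 1 + 1 = p := by ring
  rw [h1]


set_option maxRecDepth 40000 in
/-- **Closed form of the iterated integrals `ħ_{K,k}`** (Theorem 2, eq. (20)):
for pairwise distinct positive `N₁,…,N_K`, positive `b₁,…,b_K` with cumulative sums
`B_k = Σ_{l=1}^k b_l`, every `k ∈ {1,…,K}` and every `x ∈ (0, 2^{B_k}]`,
`ħ_{K,k}(x) = (−1)^{K−k+1}(Π_{i=k}^K N_i)·x^{1/N_k}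
  + Σ_{i=0}^{K−k} c_{k,i}·x^{1/N_k − 1/N_{k+i}}`. -/
theorem hbar_closed_form (K : ℕ) (hK : 1 ≤ K) (N B b : ℕ → ℝ)
    (hN : ∀ i ∈ Finset.Icc 1 K, 0 < N i)
    (hNdist : ∀ i ∈ Finset.Icc 1 K, ∀ j ∈ Finset.Icc 1 K, i ≠ j → N i ≠ N j)
    (hb : ∀ i ∈ Finset.Icc 1 K, 0 < b i)
    (hB : ∀ k, B k = ∑ l ∈ Finset.Icc 1 k, b l) :
    ∀ k ∈ Finset.Icc 1 K, ∀ x ∈ Set.Ioc (0 : ℝ) ((2 : ℝ) ^ (B k)),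
      hbarAux N B K (K - k) x
        = (-1 : ℝ) ^ (K - k + 1) * (∏ i ∈ Finset.Icc k K, N i) * x ^ (1 / N k)
          + ∑ i ∈ Finset.range (K - k + 1),
              coefAux N B K (K - k) i * x ^ (1 / N k - 1 / N (k + i)) := by
  suffices H : ∀ j, j + 1 ≤ K → ∀ x ∈ Set.Ioc (0:ℝ) ((2:ℝ) ^ (B (K - j))),
      hbarAux N B K j x
        = (-1:ℝ)^(j+1) * (∏ i ∈ Finset.Icc (K-j) K, N i) * x ^ (1 / N (K-j))
          + ∑ i ∈ Finset.range (j+1),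
              coefAux N B K j i * x ^ (1 / N (K-j) - 1 / N (K-j+i)) by
    intro k hk x hx
    rw [Finset.mem_Icc] at hk
    have h1 : K - (K - k) = k := Nat.sub_sub_self hk.2
    have := H (K - k) (by omega) x (by rw [h1]; exact hx)
    rwa [h1] at this
  intro j
  induction j with
  | zero =>
      intro _ x hx
      simp only [Nat.sub_zero, hbarAux]
      rw [Finset.sum_range_one, Finset.Icc_self, Finset.prod_singleton]
      simp only [Nat.add_zero, sub_self, Real.rpow_zero, mul_one, coefAux]
      ring
  | succ j IH =>
      intro hj1 x hx
      set k := K - (j + 1) with hkdef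
      have hkj : K - j = k + 1 := by omega
      have hNk : 0 < N k := hN k (Finset.mem_Icc.mpr ⟨by omega, by omega⟩)
      have hx0 : 0 < x := hx.1
      have hxy : x ≤ (2:ℝ) ^ (B k) := hx.2
      have hNm : ∀ i, i ≤ j → 0 < N (k + 1 + i) := fun i hij =>
        hN _ (Finset.mem_Icc.mpr ⟨by omega, by omega⟩)
      have hNne : ∀ i, i ≤ j → N (k + 1 + i) - N k ≠ 0 := fun i hij =>
        sub_ne_zero.mpr (hNdist _ (Finset.mem_Icc.mpr ⟨by omega, by omega⟩) k
          (Finset.mem_Icc.mpr ⟨by omega, by omega⟩) (by omega))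
      have hpne : ∀ i, i ≤ j → 1 / N k - 1 / N (k + 1 + i) ≠ 0 := by
        intro i hij
        rw [div_sub_div _ _ hNk.ne' (hNm i hij).ne', one_mul, mul_one]
        exact div_ne_zero (hNne i hij) (mul_ne_zero hNk.ne' (hNm i hij).ne')
      have hBle : B k ≤ B (k + 1) := by
        rw [hB, hB, Finset.sum_Icc_succ_top (by omega : 1 ≤ k + 1)]
        have := hb (k+1) (Finset.mem_Icc.mpr ⟨by omega, by omega⟩)
        linarith
      have hIH := IH (by omega)
      rw [hkj] at hIH
      simp only [hbarAux]
      rw [← hkdef, hkj]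
      -- rewrite the integrand pointwise
      have hcong : Set.EqOn
          (fun t : ℝ => t ^ (1 / N k - 1 / N (k+1) - 1) * hbarAux N B K j t)
          (fun t : ℝ => ((-1:ℝ)^(j+1) * ∏ i ∈ Finset.Icc (k+1) K, N i) * t ^ (1 / N k - 1)
            + ∑ i ∈ Finset.range (j+1),
                coefAux N B K j i * t ^ (1 / N k - 1 / N (k+1+i) - 1))
          (Set.Ioo x ((2:ℝ) ^ (B k))) := by
        intro t ht
        have ht0 : 0 < t := lt_trans hx0 ht.1
        have ht2 : t ∈ Set.Ioc (0:ℝ) ((2:ℝ) ^ (B (k+1))) :=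
          ⟨ht0, le_trans ht.2.le (Real.rpow_le_rpow_of_exponent_le one_le_two hBle)⟩
        simp only
        rw [hIH t ht2, mul_add, Finset.mul_sum]
        congr 1
        · rw [mul_left_comm, ← Real.rpow_add ht0,
            show (1 / N k - 1 / N (k+1) - 1) + 1 / N (k+1) = 1 / N k - 1 by ring]
        · refine Finset.sum_congr rfl fun i hi => ?_
          rw [mul_left_comm, ← Real.rpow_add ht0,
            show (1 / N k - 1 / N (k+1) - 1) + (1 / N (k+1) - 1 / N (k+1+i))
              = 1 / N k - 1 / N (k+1+i) - 1 by ring]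
      rw [MeasureTheory.setIntegral_congr_fun measurableSet_Ioo hcong]
      rw [MeasureTheory.integral_add ((integrableOn_rpow_Ioo' hx0).const_mul _)
            (integrable_finset_sum _ fun i _ => (integrableOn_rpow_Ioo' hx0).const_mul _),
          MeasureTheory.integral_finset_sum _ fun i _ => (integrableOn_rpow_Ioo' hx0).const_mul _]
      simp only [MeasureTheory.integral_const_mul]
      rw [integral_rpow_Ioo' hx0 hxy (by positivity : (1:ℝ)/N k ≠ 0)]
      rw [Finset.sum_congr rfl (fun i hi => by
        rw [integral_rpow_Ioo' hx0 hxy (hpne i (by simpa using Nat.lt_succ_iff.mp (Finset.mem_range.mp hi)))])]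
      -- RHS manipulations
      conv_rhs => rw [Finset.sum_range_succ']
      simp only [coefAux]
      rw [← hkdef]
      simp only [Nat.add_zero, sub_self, Real.rpow_zero, mul_one]
      simp only [show ∀ i:ℕ, k+1+i = k + (i+1) from fun i => by omega]
      rw [show Finset.Icc 1 (j+1) = Finset.Ico 1 (j+1+1) from (Finset.Ico_add_one_right_eq_Icc ..).symm,
        Finset.sum_Ico_eq_sum_range]
      simp only [Nat.add_sub_cancel, show ∀ i:ℕ, 1+i-1 = i from fun i => by omega,
        show ∀ i:ℕ, k + (1+i) = k + (i+1) from fun i => by omega]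
      have hY1 : ((2:ℝ)^(B k))^(1/N k) = (2:ℝ)^(B k / N k) := by
        rw [← Real.rpow_mul (by norm_num), mul_one_div]
      have hY2 : ∀ i:ℕ, ((2:ℝ)^(B k))^(1/N k - 1/N (k+(i+1)))
          = (2:ℝ)^(B k / N k - B k / N (k+(i+1))) := by
        intro i
        rw [← Real.rpow_mul (by norm_num)]
        congr 1
        ring
      simp only [hY1, hY2]
      have hProd : ∏ i ∈ Finset.Icc k K, N i = N k * ∏ i ∈ Finset.Icc (k+1) K, N i := by
        rw [show Finset.Icc k K = insert k (Finset.Icc (k+1) K) from by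
            ext a; simp only [Finset.mem_Icc, Finset.mem_insert]; omega,
          Finset.prod_insert (by simp)]
      rw [hProd]
      have key : ∑ i ∈ Finset.range (j+1),
            coefAux N B K j i *
              (((2:ℝ) ^ (B k / N k - B k / N (k + (i+1))) - x ^ (1 / N k - 1 / N (k + (i+1)))) /
                (1 / N k - 1 / N (k + (i+1))))
          = (∑ i ∈ Finset.range (j+1),
              -(N (k + (i+1)) * N k / (N (k + (i+1)) - N k)) * coefAux N B K j i *
                x ^ (1 / N k - 1 / N (k + (i+1))))
            + ∑ i ∈ Finset.range (j+1),
                coefAux N B K j i * (N (k + (i+1)) * N k / (N (k + (i+1)) - N k)) *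
                  (2:ℝ) ^ (B k / N k - B k / N (k + (i+1))) := by
        rw [← Finset.sum_add_distrib]
        refine Finset.sum_congr rfl fun i hi => ?_
        have hij : i ≤ j := by
          have := Finset.mem_range.mp hi; omega
        rw [show k + (i+1) = k+1+i from by omega]
        have h1 : N k ≠ 0 := hNk.ne'
        have h2 : N (k+1+i) ≠ 0 := (hNm i hij).ne'
        have h3 := hNne i hij
        have h4 := hpne i hij
        field_simp
        ring
      rw [key, show ∀ a : ℝ, a / (1 / N k) = a * N k from fun a => by field_simp]
      ring
end

section
/- Fix K ≥ 2, positive reals N₁,…,N_K, and positive reals b₁,…,b_K with cumulative sums B_k = Σ_{l=1}^k b_l. Then the K-dimensional Lebesgue measure of the set { x ∈ (0,∞)^K : Π_{l=1}^k (1+x_l)^{N_l} < 2^{B_k} for every k ∈ {1,…,K} } equals (Π_{k=1}^K N_k)^{−1} times the (K−1)-fold iterated integral ∫_{1}^{2^{B₁}} ⋯ ∫_{y_{K−2}}^{2^{B_{K−1}}} [ Π_{k=1}^{K−1} y_k^{1/N_k − 1/N_{k+1} − 1} ] · N_K·( 2^{B_K/N_K} − y_{K−1}^{1/N_K} ) dy₁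 ⋯ dy_{K−1}, where the integration region is 1 < y₁ < 2^{B₁}, y₁ < y₂ < 2^{B₂}, …, y_{K−2} < y_{K−1} < 2^{B_{K−1}}. -/
open MeasureTheory Real

/-- 1D region description. -/
lemma set1d (ν c T : ℝ) (hν : 0 < ν) (hc : 0 < c) (hT : 0 < T) :
    {x : ℝ | 0 < x ∧ c * (1 + x) ^ ν < T} = Set.Ioo 0 ((T / c) ^ (1 / ν) - 1) := by
  ext x
  simp only [Set.mem_setOf_eq, Set.mem_Ioo]
  refine and_congr_right fun hx => ?_
  rw [mul_comm, ← lt_div_iff₀ hc, one_div,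
    ← Real.lt_rpow_inv_iff_of_pos (by linarith) (le_of_lt (div_pos hT hc)) hν]
  constructor <;> intro <;> linarith

lemma Iic_succ_eq {n : ℕ} (k : Fin n) :
    Finset.Iic k.succ
      = insert (0 : Fin (n + 1)) ((Finset.Iic k).map ⟨Fin.succ, Fin.succ_injective n⟩) := by
  ext l
  simp only [Finset.mem_Iic, Finset.mem_insert, Finset.mem_map,
    Function.Embedding.coeFn_mk]
  induction l using Fin.cases with
  | zero => simp
  | succ l =>
      simp only [Fin.succ_le_succ_iff, Fin.succ_ne_zero, false_or]
      constructor
      · intro hl; exact ⟨l, hl, rfl⟩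
      · rintro ⟨l', hl', h⟩
        rwa [← Fin.succ_injective n h]

/-- Peeling the first coordinate of a product volume. -/
lemma volume_cons {n : ℕ} (S : Set (Fin (n + 1) → ℝ)) (hS : MeasurableSet S) :
    volume S = ∫⁻ x : ℝ, volume {t : Fin n → ℝ | Fin.cons x t ∈ S} := by
  have h := (measurePreserving_piFinSuccAbove (fun _ : Fin (n + 1) => (volume : Measure ℝ)) 0).symm
  have h2 : volume S
      = ((volume : Measure ℝ).prod (Measure.pi fun _ : Fin n => volume))
        ((MeasurableEquiv.piFinSuccAbove (fun _ => ℝ) 0).symm ⁻¹' S) := by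
    rw [h.measure_preimage hS.nullMeasurableSet]
    exact (congrFun (congrArg _ MeasureTheory.volume_pi) S)
  rw [h2, Measure.prod_apply ((MeasurableEquiv.piFinSuccAbove (fun _ => ℝ) 0).symm.measurable hS)]
  refine lintegral_congr fun x => ?_
  rw [MeasureTheory.volume_pi]
  congr 1
  ext t
  simp [MeasurableEquiv.piFinSuccAbove_symm_apply, Fin.insertNthEquiv, Fin.insertNth_zero]

lemma h_image (ν c T : ℝ) (hν : 0 < ν) (hc : 0 < c) (hT : 0 < T) :
    (fun y : ℝ => (y / c) ^ (1 / ν) - 1) '' Set.Ioo c T = Set.Ioo 0 ((T / c) ^ (1 / ν) - 1) := by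
  have h1ν : 0 < 1 / ν := by positivity
  ext x
  constructor
  · rintro ⟨y, ⟨hy1, hy2⟩, rfl⟩
    have hy0 : 0 < y := hc.trans hy1
    constructor
    · have : (1 : ℝ) < (y / c) ^ (1 / ν) := by
        rw [Real.one_lt_rpow_iff_of_pos (div_pos hy0 hc)]
        exact Or.inl ⟨(one_lt_div hc).2 hy1, h1ν⟩
      simp only []
      linarith
    · have : (y / c) ^ (1 / ν) < (T / c) ^ (1 / ν) :=
        Real.rpow_lt_rpow (div_nonneg hy0.le hc.le) (by gcongr) h1ν
      simp only []
      linarith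
  · rintro ⟨hx0, hx1⟩
    have hTc : 0 < T / c := div_pos hT hc
    refine ⟨c * (1 + x) ^ ν, ⟨?_, ?_⟩, ?_⟩
    · nlinarith [Real.one_lt_rpow_iff_of_pos (show (0:ℝ) < 1 + x by linarith) (y := ν) |>.2
        (Or.inl ⟨by linarith, hν⟩)]
    · have h2 : 1 + x < (T / c) ^ (1 / ν) := by linarith
      have h3 : (1 + x) ^ ν < T / c := by
        rwa [one_div, Real.lt_rpow_inv_iff_of_pos (by linarith) hTc.le hν] at h2
      calc c * (1 + x) ^ ν < c * (T / c) := (mul_lt_mul_iff_right₀ hc).2 h3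
        _ = T := by field_simp
    · have hx' : (0:ℝ) ≤ 1 + x := by linarith
      show (c * (1 + x) ^ ν / c) ^ (1 / ν) - 1 = x
      rw [mul_comm, mul_div_assoc, div_self hc.ne', mul_one, ← Real.rpow_mul hx',
        mul_one_div_cancel hν.ne', Real.rpow_one]
      ring

lemma h_deriv (ν c : ℝ) (hν : 0 < ν) (hc : 0 < c) {y : ℝ} (hy : 0 < y) :
    HasDerivAt (fun y : ℝ => (y / c) ^ (1 / ν) - 1)
      (1 / ν * c ^ (-(1 / ν)) * y ^ (1 / ν - 1)) y := by
  have h1 : HasDerivAt (fun y : ℝ => y / c) (1 / c) y := by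
    simpa using (hasDerivAt_id y).div_const c
  have h2 : HasDerivAt (fun u : ℝ => u ^ (1 / ν))
      ((1 / ν) * (y / c) ^ (1 / ν - 1)) (y / c) :=
    Real.hasDerivAt_rpow_const (Or.inl (div_pos hy hc).ne')
  have h3 := (h2.comp y h1).sub_const 1
  refine h3.congr_deriv ?_
  rw [Real.div_rpow hy.le hc.le]
  have hcc : c ^ (1 / ν - 1) * c = c ^ (1 / ν) := by
    rw [← Real.rpow_add_one hc.ne', sub_add_cancel]
  have hcp : (0:ℝ) < c ^ (1 / ν - 1) := Real.rpow_pos_of_pos hc _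
  rw [Real.rpow_neg hc.le, ← hcc, mul_inv]
  ring

section Hbar

variable {N B : ℕ → ℝ} {K : ℕ}

lemma two_rpow_pos (a : ℝ) : (0:ℝ) < (2:ℝ) ^ a := Real.rpow_pos_of_pos two_pos a

lemma hbar_nonneg (hK : 1 ≤ K)
    (hN : ∀ k ∈ Finset.Icc 1 K, 0 < N k)
    (hBm : ∀ j k, 1 ≤ j → j < k → k ≤ K → B j < B k) :
    ∀ j, j ≤ K - 1 → ∀ x : ℝ, 0 < x → x ≤ (2:ℝ) ^ (B (K - j)) →
      0 ≤ hbarAux N B K j x := by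
  intro j
  induction j with
  | zero =>
      intro _ x hx hxle
      have hNK : 0 < N K := hN K (by simp [Finset.mem_Icc]; omega)
      have : x ^ (1 / N K) ≤ (2:ℝ) ^ (B K / N K) := by
        have h1 : x ^ (1 / N K) ≤ ((2:ℝ) ^ (B K)) ^ (1 / N K) :=
          Real.rpow_le_rpow hx.le (by simpa using hxle) (by positivity)
        rwa [← Real.rpow_mul (by norm_num), mul_one_div] at h1
      show 0 ≤ N K * ((2 : ℝ) ^ (B K / N K) - x ^ (1 / N K))
      nlinarith
  | succ j ih =>
      intro hj x hx _
      show 0 ≤ ∫ t in Set.Ioo x ((2 : ℝ) ^ (B (K - (j + 1)))),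
        t ^ (1 / N (K - (j + 1)) - 1 / N (K - j) - 1) * hbarAux N B K j t
      refine MeasureTheory.setIntegral_nonneg measurableSet_Ioo fun t ht => ?_
      have ht0 : 0 < t := hx.trans ht.1
      refine mul_nonneg (Real.rpow_nonneg ht0.le _) (ih (by omega) t ht0 ?_)
      refine le_trans ht.2.le ?_
      rw [Real.rpow_le_rpow_left_iff one_lt_two]
      exact (hBm (K - (j + 1)) (K - j) (by omega) (by omega) (by omega)).le

lemma hbar_contOn (hK : 1 ≤ K)
    (hN : ∀ k ∈ Finset.Icc 1 K, 0 < N k)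
    (hB0 : ∀ k, 1 ≤ k → k ≤ K → 0 < B k) :
    ∀ j, j ≤ K - 1 → ContinuousOn (hbarAux N B K j) (Set.Ici 1) := by
  intro j
  induction j with
  | zero =>
      intro _
      show ContinuousOn (fun x : ℝ => N K * ((2 : ℝ) ^ (B K / N K) - x ^ (1 / N K))) _
      refine continuousOn_const.mul (continuousOn_const.sub fun x hx => ?_)
      exact (Real.continuousAt_rpow_const x _ (Or.inl (by simp at hx; positivity))).continuousWithinAt
  | succ j ih =>
      intro hj
      set T' : ℝ := (2:ℝ) ^ (B (K - (j + 1))) with hT'def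
      have hT' : 1 < T' := by
        rw [hT'def, show (1:ℝ) = (2:ℝ) ^ (0:ℝ) by simp,
          Real.rpow_lt_rpow_left_iff one_lt_two]
        exact hB0 (K - (j+1)) (by omega) (by omega)
      set w : ℝ → ℝ := fun t => t ^ (1 / N (K - (j + 1)) - 1 / N (K - j) - 1) * hbarAux N B K j t with hwdef
      have hw : ContinuousOn w (Set.Ici 1) := by
        refine ContinuousOn.mul (fun x hx => ?_) (ih (by omega))
        exact (Real.continuousAt_rpow_const x _ (Or.inl (by simp at hx; positivity))).continuousWithinAt
      have hwint : IntegrableOn w (Set.Icc 1 T') volume :=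
        (hw.mono Set.Icc_subset_Ici_self).integrableOn_Icc
      have key : ∀ x ∈ Set.Ici (1:ℝ), hbarAux N B K (j+1) x
          = (∫ t in (1:ℝ)..T', w t) - ∫ t in (1:ℝ)..(min x T'), w t := by
        intro x hx
        simp only [Set.mem_Ici] at hx
        rcases le_or_gt x T' with hxT | hxT
        · rw [min_eq_left hxT]
          have hIoo : hbarAux N B K (j+1) x = ∫ t in x..T', w t := by
            rw [intervalIntegral.integral_of_le hxT, MeasureTheory.integral_Ioc_eq_integral_Ioo]
            rfl
          have hadd : (∫ t in (1:ℝ)..x, w t) + ∫ t in x..T', w t = ∫ t in (1:ℝ)..T', w t := by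
            refine intervalIntegral.integral_add_adjacent_intervals ?_ ?_
            · rw [intervalIntegrable_iff]
              refine hwint.mono_set ?_
              rw [Set.uIoc_of_le hx]
              exact fun t ht => ⟨le_of_lt ht.1, le_trans ht.2 hxT⟩
            · rw [intervalIntegrable_iff]
              refine hwint.mono_set ?_
              rw [Set.uIoc_of_le hxT]
              exact fun t ht => ⟨le_trans hx (le_of_lt ht.1), ht.2⟩
          rw [hIoo]
          linarith
        · rw [min_eq_right hxT.le]
          have : hbarAux N B K (j+1) x = 0 := by
            show (∫ t in Set.Ioo x T', w t) = 0
            rw [Set.Ioo_eq_empty (by exact fun h => absurd (hxT.trans h) (lt_irrefl T')), 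
              MeasureTheory.Measure.restrict_empty, MeasureTheory.integral_zero_measure]
          rw [this]
          simp
      have hprim : ContinuousOn (fun u => ∫ t in (1:ℝ)..u, w t) (Set.uIcc 1 T') :=
        intervalIntegral.continuousOn_primitive_interval (by rwa [Set.uIcc_of_le hT'.le])
      refine ContinuousOn.congr ?_ key
      refine continuousOn_const.sub (hprim.comp ((continuous_id.min continuous_const).continuousOn) ?_)
      intro x hx
      rw [Set.uIcc_of_le hT'.le]
      exact ⟨le_min hx hT'.le, min_le_right _ _⟩

end Hbar

lemma Iic_zero_fin (n : ℕ) : Finset.Iic (0 : Fin (n+1)) = {0} := by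
  ext l; simp [Fin.le_zero_iff]

lemma measurableSet_S {m : ℕ} (e Tk : ℕ → ℝ) (c : ℝ) :
    MeasurableSet {x : Fin m → ℝ | (∀ i, 0 < x i) ∧
      ∀ k : Fin m, c * ∏ l ∈ Finset.Iic k, (1 + x l) ^ (e l.1) < Tk k.1} := by
  have h1 : MeasurableSet {x : Fin m → ℝ | ∀ i, 0 < x i} := by
    rw [Set.setOf_forall]
    exact MeasurableSet.iInter fun i =>
      measurableSet_lt measurable_const (measurable_pi_apply i)
  have h2 : MeasurableSet {x : Fin m → ℝ |
      ∀ k : Fin m, c * ∏ l ∈ Finset.Iic k, (1 + x l) ^ (e l.1) < Tk k.1} := by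
    rw [Set.setOf_forall]
    refine MeasurableSet.iInter fun k => measurableSet_lt ?_ measurable_const
    refine Measurable.const_mul ?_ c
    refine Finset.measurable_prod _ fun l _ => ?_
    exact Measurable.pow (measurable_const.add (measurable_pi_apply l)) measurable_const
  exact h1.inter h2

lemma volume_aux (K : ℕ) (N B : ℕ → ℝ)
    (hN : ∀ k ∈ Finset.Icc 1 K, 0 < N k)
    (hB0 : ∀ k, 1 ≤ k → k ≤ K → 0 < B k)
    (hBm : ∀ j k, 1 ≤ j → j < k → k ≤ K → B j < B k) :
    ∀ m, 1 ≤ m → m ≤ K → ∀ c : ℝ, 1 ≤ c →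
    volume {x : Fin m → ℝ | (∀ i, 0 < x i) ∧
        ∀ k : Fin m, c * ∏ l ∈ Finset.Iic k, (1 + x l) ^ (N (K - m + l.1 + 1))
          < (2 : ℝ) ^ (B (K - m + k.1 + 1))}
      = ENNReal.ofReal ((∏ k ∈ Finset.Icc (K - m + 1) K, N k)⁻¹ *
          c ^ (-(1 / N (K - m + 1))) * hbarAux N B K (m - 1) c) := by
  intro m hm
  induction m, hm using Nat.le_induction with
  | base =>
      intro hK c hc
      have hc0 : (0:ℝ) < c := lt_of_lt_of_le one_pos hc
      have hK1 : K - 1 + 1 = K := by omega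
      have hNK : 0 < N K := hN K (by simp [Finset.mem_Icc]; omega)
      have hTk : (0:ℝ) < (2:ℝ) ^ (B K) := two_rpow_pos _
      -- set equality
      have hS : {x : Fin 1 → ℝ | (∀ i, 0 < x i) ∧
          ∀ k : Fin 1, c * ∏ l ∈ Finset.Iic k, (1 + x l) ^ (N (K - 1 + l.1 + 1))
            < (2 : ℝ) ^ (B (K - 1 + k.1 + 1))}
          = (fun x : Fin 1 → ℝ => x 0) ⁻¹'
            (Set.Ioo 0 (((2:ℝ) ^ (B K) / c) ^ (1 / N K) - 1)) := by
        rw [← set1d (N K) c _ hNK hc0 hTk]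
        ext x
        simp only [Set.mem_setOf_eq, Set.mem_preimage]
        constructor
        · rintro ⟨h1, h2⟩
          refine ⟨h1 0, ?_⟩
          have := h2 0
          have e1 : K - 1 + (0:ℕ) + 1 = K := by omega
          rwa [Iic_zero_fin, Finset.prod_singleton, Fin.val_zero, e1] at this
        · rintro ⟨h1, h2⟩
          refine ⟨fun i => by rwa [Subsingleton.elim i 0], fun k => ?_⟩
          have e1 : K - 1 + (0:ℕ) + 1 = K := by omega
          rw [Subsingleton.elim k 0, Iic_zero_fin, Finset.prod_singleton, Fin.val_zero, e1]
          exact h2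
      rw [hS]
      rw [show ((fun x : Fin 1 → ℝ => x 0) ⁻¹'
            (Set.Ioo 0 (((2:ℝ) ^ (B K) / c) ^ (1 / N K) - 1)))
          = ⇑(MeasurableEquiv.funUnique (Fin 1) ℝ) ⁻¹'
            (Set.Ioo 0 (((2:ℝ) ^ (B K) / c) ^ (1 / N K) - 1)) from rfl]
      rw [show volume (⇑(MeasurableEquiv.funUnique (Fin 1) ℝ) ⁻¹'
            (Set.Ioo 0 (((2:ℝ) ^ (B K) / c) ^ (1 / N K) - 1)))
          = volume (Set.Ioo 0 (((2:ℝ) ^ (B K) / c) ^ (1 / N K) - 1)) from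
        (volume_preserving_funUnique (Fin 1) ℝ).measure_preimage
        measurableSet_Ioo.nullMeasurableSet, Real.volume_Ioo, sub_zero]
      -- real computation
      congr 1
      rw [hK1, Finset.Icc_self, Finset.prod_singleton]
      show ((2:ℝ) ^ (B K) / c) ^ (1 / N K) - 1
        = (N K)⁻¹ * c ^ (-(1 / N K)) * (N K * ((2 : ℝ) ^ (B K / N K) - c ^ (1 / N K)))
      have h1 : ((2:ℝ) ^ (B K) / c) ^ (1 / N K)
          = (2:ℝ) ^ (B K / N K) * c ^ (-(1 / N K)) := by
        rw [Real.div_rpow hTk.le hc0.le, ← Real.rpow_mul (by norm_num), mul_one_div,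
          Real.rpow_neg hc0.le, div_eq_mul_inv]
      have h2 : c ^ (-(1 / N K)) * c ^ (1 / N K) = 1 := by
        rw [← Real.rpow_add hc0]; simp
      calc ((2:ℝ) ^ (B K) / c) ^ (1 / N K) - 1
          = (2:ℝ) ^ (B K / N K) * c ^ (-(1 / N K)) - 1 := by rw [h1]
        _ = ((N K)⁻¹ * N K) * (c ^ (-(1 / N K)) * (2:ℝ) ^ (B K / N K)
              - (c ^ (-(1 / N K)) * c ^ (1 / N K))) := by
            rw [inv_mul_cancel₀ hNK.ne', h2]; ring
        _ = (N K)⁻¹ * c ^ (-(1 / N K)) * (N K * ((2 : ℝ) ^ (B K / N K) - c ^ (1 / N K))) := by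
            ring
  | succ m hm ih =>
      intro hmK c hc
      obtain ⟨j, rfl⟩ : ∃ j, m = j + 1 := ⟨m - 1, by omega⟩
      have hc0 : (0:ℝ) < c := lt_of_lt_of_le one_pos hc
      have hs1 : K - (j + 1) = K - (j + 1 + 1) + 1 := by omega
      have hs2 : K - j = K - (j + 1 + 1) + 2 := by omega
      set s : ℕ := K - (j + 1 + 1) with hsdef
      set ν : ℝ := N (s + 1) with hνdef
      have hν : 0 < ν := hN (s + 1) (by simp [Finset.mem_Icc]; omega)
      set T : ℝ := (2:ℝ) ^ (B (s + 1)) with hTdef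
      have hT : (0:ℝ) < T := two_rpow_pos _
      set A : ℝ := (∏ k ∈ Finset.Icc (s + 2) K, N k)⁻¹ with hAdef
      have hA : 0 ≤ A := by
        rw [hAdef]
        refine inv_nonneg.2 (Finset.prod_nonneg fun k hk => ?_)
        simp only [Finset.mem_Icc] at hk
        exact (hN k (by simp [Finset.mem_Icc]; omega)).le
      set E : Set ℝ := Set.Ioo 0 ((T / c) ^ (1 / ν) - 1) with hEdef
      have hE : {x : ℝ | 0 < x ∧ c * (1 + x) ^ ν < T} = E := set1d ν c T hν hc0 hT
      set g : ℝ → ℝ := fun x => c * (1 + x) ^ ν with hgdef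
      set S : Set (Fin (j + 1 + 1) → ℝ) := {x : Fin (j + 1 + 1) → ℝ | (∀ i, 0 < x i) ∧
          ∀ k : Fin (j + 1 + 1),
            c * ∏ l ∈ Finset.Iic k, (1 + x l) ^ (N (K - (j + 1 + 1) + l.1 + 1))
            < (2 : ℝ) ^ (B (K - (j + 1 + 1) + k.1 + 1))} with hSdef
      set S₂ : ℝ → Set (Fin (j + 1) → ℝ) := fun c' => {t : Fin (j + 1) → ℝ | (∀ i, 0 < t i) ∧
          ∀ k : Fin (j + 1),
            c' * ∏ l ∈ Finset.Iic k, (1 + t l) ^ (N (K - (j + 1) + l.1 + 1))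
            < (2 : ℝ) ^ (B (K - (j + 1) + k.1 + 1))} with hS₂def
      have hSmeas : MeasurableSet S :=
        measurableSet_S (fun i => N (K - (j + 1 + 1) + i + 1))
          (fun i => (2:ℝ) ^ (B (K - (j + 1 + 1) + i + 1))) c
      -- membership characterisation
      have hcons : ∀ (x : ℝ) (t : Fin (j + 1) → ℝ),
          Fin.cons x t ∈ S ↔ x ∈ E ∧ t ∈ S₂ (g x) := by
        intro x t
        rw [← hE]
        have hidx : ∀ a : ℕ, s + (a + 1) + 1 = K - (j + 1) + a + 1 := by intro a; omega
        have hprod : ∀ k : Fin (j + 1),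
            c * ∏ l ∈ Finset.Iic k.succ,
                (1 + Fin.cons x t l) ^ (N (s + l.1 + 1))
            = g x * ∏ l ∈ Finset.Iic k, (1 + t l) ^ (N (K - (j + 1) + l.1 + 1)) := by
          intro k
          rw [Iic_succ_eq k, Finset.prod_insert (by simp [Fin.succ_ne_zero]),
            Finset.prod_map]
          simp only [Function.Embedding.coeFn_mk, Fin.cons_zero, Fin.cons_succ,
            Fin.val_succ, Fin.val_zero, Nat.add_zero]
          have hpc : (∏ l ∈ Finset.Iic k, (1 + t l) ^ (N (s + (l.1 + 1) + 1)))
              = ∏ l ∈ Finset.Iic k, (1 + t l) ^ (N (K - (j + 1) + l.1 + 1)) :=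
            Finset.prod_congr rfl fun (l : Fin (j + 1)) _ => by rw [hidx l.1]
          rw [hpc, ← mul_assoc]
        constructor
        · rintro ⟨hpos, hcond⟩
          have hx : 0 < x := by have := hpos 0; rwa [Fin.cons_zero] at this
          have h0 := hcond 0
          rw [Iic_zero_fin, Finset.prod_singleton, Fin.cons_zero, Fin.val_zero,
            Nat.add_zero] at h0
          refine ⟨⟨hx, h0⟩, fun i => by have := hpos i.succ; rwa [Fin.cons_succ] at this,
            fun k => ?_⟩
          have hk := hcond k.succ
          rw [hprod k] at hk
          rwa [show s + (k.succ).1 + 1 = K - (j + 1) + k.1 + 1 by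
            rw [Fin.val_succ]; omega] at hk
        · rintro ⟨⟨hx, hgx⟩, hpos, hcond⟩
          constructor
          · intro i
            induction i using Fin.cases with
            | zero => rwa [Fin.cons_zero]
            | succ i => rw [Fin.cons_succ]; exact hpos i
          · intro k
            induction k using Fin.cases with
            | zero =>
                rw [Iic_zero_fin, Finset.prod_singleton, Fin.cons_zero, Fin.val_zero,
                  Nat.add_zero]
                exact hgx
            | succ k =>
                rw [hprod k, show s + (k.succ).1 + 1 = K - (j + 1) + k.1 + 1 by
                  rw [Fin.val_succ]; omega]
                exact hcond k
      -- Fubini: peel off the first coordinate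
      rw [volume_cons S hSmeas]
      have hind : ∀ x : ℝ, volume {t : Fin (j + 1) → ℝ | Fin.cons x t ∈ S}
          = E.indicator (fun x => volume (S₂ (g x))) x := by
        intro x
        by_cases hx : x ∈ E
        · rw [Set.indicator_of_mem hx]
          congr 1
          ext t
          rw [Set.mem_setOf_eq, hcons x t]
          simp [hx]
        · rw [Set.indicator_of_notMem hx]
          have hemp : {t : Fin (j + 1) → ℝ | Fin.cons x t ∈ S} = ∅ := by
            ext t
            simp only [Set.mem_setOf_eq, hcons x t, Set.mem_empty_iff_false, iff_false]
            exact fun h => hx h.1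
          rw [hemp, measure_empty]
      rw [lintegral_congr hind, lintegral_indicator measurableSet_Ioo]
      -- apply the induction hypothesis
      have ih' := ih (by omega)
      simp only [Nat.add_sub_cancel] at ih'
      have hs1' : K - (j + 1) + 1 = s + 2 := by omega
      have hg1' : ∀ x : ℝ, 0 ≤ x → 1 ≤ g x := by
        intro x hx
        have h1 : (1:ℝ) ≤ (1 + x) ^ ν := Real.one_le_rpow (by linarith) hν.le
        show 1 ≤ c * (1 + x) ^ ν
        nlinarith
      set F : ℝ → ℝ := fun y => A * y ^ (-(1 / N (s + 2))) * hbarAux N B K j y with hFdef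
      have hstep : ∀ x ∈ E, volume (S₂ (g x)) = ENNReal.ofReal (F (g x)) := by
        intro x hx
        rw [← hE] at hx
        have := ih' (g x) (hg1' x hx.1.le)
        rw [hs1'] at this
        rw [hFdef]
        exact this
      rw [setLIntegral_congr_fun measurableSet_Ioo hstep]
      -- convert to a Bochner integral
      have hFcont : ContinuousOn F (Set.Ici 1) := by
        rw [hFdef]
        refine ContinuousOn.mul (ContinuousOn.mul continuousOn_const fun y hy => ?_)
          (hbar_contOn (by omega) hN hB0 j (by omega))
        have hy1 : (1:ℝ) ≤ y := hy
        exact (Real.continuousAt_rpow_const y _ (Or.inl (by positivity))).continuousWithinAt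
      have hgcont : ContinuousOn g (Set.Icc 0 ((T / c) ^ (1 / ν) - 1)) := by
        refine continuousOn_const.mul fun x hx => ?_
        have hx0 : (0:ℝ) ≤ x := hx.1
        exact ((Real.continuousAt_rpow_const (1 + x) ν (Or.inl (by positivity))).comp
          ((continuous_const.add continuous_id).continuousAt)).continuousWithinAt
      have hFg : IntegrableOn (fun x => F (g x)) E volume := by
        refine IntegrableOn.mono_set ?_ Set.Ioo_subset_Icc_self
        refine ContinuousOn.integrableOn_Icc ?_
        exact hFcont.comp hgcont fun x hx => hg1' x hx.1
      have hFgpos : ∀ x ∈ E, 0 ≤ F (g x) := by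
        intro x hx
        rw [← hE] at hx
        have hgx1 : 1 ≤ g x := hg1' x hx.1.le
        have hgx0 : 0 < g x := lt_of_lt_of_le one_pos hgx1
        rw [hFdef]
        refine mul_nonneg (mul_nonneg hA (Real.rpow_nonneg hgx0.le _)) ?_
        refine hbar_nonneg (by omega) hN hBm j (by omega) (g x) hgx0 ?_
        rw [hs2]
        refine le_trans (le_of_lt (show g x < T from hx.2)) ?_
        rw [hTdef, Real.rpow_le_rpow_left_iff one_lt_two]
        exact (hBm (s + 1) (s + 2) (by omega) (by omega) (by omega)).le
      rw [← ofReal_integral_eq_lintegral_ofReal hFg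
        ((ae_restrict_iff' measurableSet_Ioo).2 (Filter.Eventually.of_forall hFgpos))]
      -- change of variables
      have himg : (fun y : ℝ => (y / c) ^ (1 / ν) - 1) '' Set.Ioo c T = E := by
        rw [hEdef]; exact h_image ν c T hν hc0 hT
      have hmono : StrictMonoOn (fun y : ℝ => (y / c) ^ (1 / ν) - 1) (Set.Ioo c T) := by
        intro y1 hy1 y2 hy2 hlt
        have h0 : 0 < y1 := lt_trans hc0 hy1.1
        have : (y1 / c) ^ (1 / ν) < (y2 / c) ^ (1 / ν) :=
          Real.rpow_lt_rpow (by positivity) (by gcongr) (by positivity)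
        simp only []
        linarith
      have hCoV : (∫ x in E, F (g x))
          = ∫ y in Set.Ioo c T, |1 / ν * c ^ (-(1 / ν)) * y ^ (1 / ν - 1)| •
              F (g ((y / c) ^ (1 / ν) - 1)) := by
        rw [← himg]
        exact integral_image_eq_integral_abs_deriv_smul measurableSet_Ioo
          (fun y hy => (h_deriv ν c hν hc0 (lt_trans hc0 hy.1)).hasDerivWithinAt)
          hmono.injOn (fun x => F (g x))
      have hpt : ∀ y ∈ Set.Ioo c T,
          |1 / ν * c ^ (-(1 / ν)) * y ^ (1 / ν - 1)| • F (g ((y / c) ^ (1 / ν) - 1))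
          = (1 / ν * c ^ (-(1 / ν)) * A) *
              (y ^ (1 / ν - 1 / N (s + 2) - 1) * hbarAux N B K j y) := by
        intro y hy
        have hy0 : 0 < y := lt_trans hc0 hy.1
        have hgh : g ((y / c) ^ (1 / ν) - 1) = y := by
          show c * (1 + ((y / c) ^ (1 / ν) - 1)) ^ ν = y
          rw [show (1 + ((y / c) ^ (1 / ν) - 1)) = (y / c) ^ (1 / ν) by ring,
            ← Real.rpow_mul (by positivity), one_div, inv_mul_cancel₀ hν.ne',
            Real.rpow_one, mul_comm, div_mul_cancel₀ y hc0.ne']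
        have habs : |1 / ν * c ^ (-(1 / ν)) * y ^ (1 / ν - 1)|
            = 1 / ν * c ^ (-(1 / ν)) * y ^ (1 / ν - 1) := by
          refine abs_of_pos ?_
          have h1 : (0:ℝ) < c ^ (-(1 / ν)) := Real.rpow_pos_of_pos hc0 _
          have h2 : (0:ℝ) < y ^ (1 / ν - 1) := Real.rpow_pos_of_pos hy0 _
          positivity
        rw [habs, hgh, smul_eq_mul, hFdef]
        have hyadd : y ^ (1 / ν - 1) * y ^ (-(1 / N (s + 2)))
            = y ^ (1 / ν - 1 / N (s + 2) - 1) := by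
          rw [← Real.rpow_add hy0]
          ring_nf
        calc (1 / ν * c ^ (-(1 / ν)) * y ^ (1 / ν - 1)) *
              (A * y ^ (-(1 / N (s + 2))) * hbarAux N B K j y)
            = (1 / ν * c ^ (-(1 / ν)) * A) *
              ((y ^ (1 / ν - 1) * y ^ (-(1 / N (s + 2)))) * hbarAux N B K j y) := by ring
          _ = (1 / ν * c ^ (-(1 / ν)) * A) *
              (y ^ (1 / ν - 1 / N (s + 2) - 1) * hbarAux N B K j y) := by rw [hyadd]
      rw [hCoV, setIntegral_congr_fun measurableSet_Ioo hpt, MeasureTheory.integral_const_mul]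
      -- identify the remaining integral with `hbarAux (j+1)`
      have hbar_eq : (∫ y in Set.Ioo c T, y ^ (1 / ν - 1 / N (s + 2) - 1) * hbarAux N B K j y)
          = hbarAux N B K (j + 1) c := by
        show _ = ∫ t in Set.Ioo c ((2 : ℝ) ^ (B (K - (j + 1)))),
          t ^ (1 / N (K - (j + 1)) - 1 / N (K - j) - 1) * hbarAux N B K j t
        rw [hs1, hs2, hνdef, hTdef]
      rw [hbar_eq]
      -- final bookkeeping with the constants
      simp only [Nat.add_sub_cancel]
      congr 1
      have hIcc : Finset.Icc (s + 1) K = insert (s + 1) (Finset.Icc (s + 2) K) := by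
        ext a
        simp only [Finset.mem_Icc, Finset.mem_insert]
        omega
      rw [hIcc, Finset.prod_insert (by simp only [Finset.mem_Icc]; omega), mul_inv,
        hAdef, hνdef]
      ring


/-- **Volume form of the high-SNR asymptotic `K`-round outage probability of
VL-XP-HARQ**: the Lebesgue measure of
`{x ∈ (0,∞)^K : Π_{l=1}^k (1+x_l)^{N_l} < 2^{B_k} ∀k}` equals
`(Π_{k=1}^K N_k)⁻¹` times the iterated integral `ħ_{K,1}(1)`; here round `k ∈ {1,…,K}`
corresponds to the index `k−1 : Fin K`. -/
theorem volume_outage_region_eq_iterated_integral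
    (K : ℕ) (hK : 2 ≤ K) (N b B : ℕ → ℝ)
    (hN : ∀ k ∈ Finset.Icc 1 K, 0 < N k)
    (hb : ∀ k ∈ Finset.Icc 1 K, 0 < b k)
    (hB : ∀ k, B k = ∑ l ∈ Finset.Icc 1 k, b l) :
    volume {x : Fin K → ℝ | (∀ i, 0 < x i) ∧
        ∀ k : Fin K, ∏ l ∈ Finset.Iic k, (1 + x l) ^ (N (l.1 + 1))
          < (2 : ℝ) ^ (B (k.1 + 1))}
      = ENNReal.ofReal
          ((∏ k ∈ Finset.Icc 1 K, N k)⁻¹ * hbarAux N B K (K - 1) 1) := by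
  have hB0 : ∀ k, 1 ≤ k → k ≤ K → 0 < B k := by
    intro k h1 h2
    rw [hB k]
    refine Finset.sum_pos (fun l hl => ?_) (Finset.nonempty_Icc.2 h1)
    simp only [Finset.mem_Icc] at hl
    exact hb l (by simp only [Finset.mem_Icc]; omega)
  have hBm : ∀ j k, 1 ≤ j → j < k → k ≤ K → B j < B k := by
    intro j k h1 h2 h3
    have hsum : ∑ l ∈ Finset.Ico 1 (j + 1), b l + ∑ l ∈ Finset.Ico (j + 1) (k + 1), b l
        = ∑ l ∈ Finset.Ico 1 (k + 1), b l :=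
      Finset.sum_Ico_consecutive _ (by omega) (by omega)
    have hpos : 0 < ∑ l ∈ Finset.Ico (j + 1) (k + 1), b l := by
      refine Finset.sum_pos (fun l hl => ?_) (Finset.nonempty_Ico.2 (by omega))
      simp only [Finset.mem_Ico] at hl
      exact hb l (by simp only [Finset.mem_Icc]; omega)
    rw [hB j, hB k, ← Finset.Ico_add_one_right_eq_Icc 1 j, ← Finset.Ico_add_one_right_eq_Icc 1 k]
    linarith
  have main := volume_aux K N B hN hB0 hBm K (by omega) le_rfl 1 le_rfl
  simp only [Nat.sub_self, zero_add, one_mul, Real.one_rpow, mul_one] at main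
  exact main
end
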